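/- arXiv:2107.03827 — 5 statements merged into one kernel-verified Lean document; each statement's English description precedes it below -/
import Mathlib

section
/- Let G be a finite simple graph with maximum degree Δ(G) ≥ 2 such that G has no spanning even subgraph without isolated vertices (i.e., no subgraph K with V(K) = V(G) in which every vertex has even degree and every vertex has degree at least 1). Then the palette index of G is strictly larger than the minimum degree of G, i.e., š(G) > δ(G). -/
open Finset

namespace PaletteAux

/-- Indicator-support of a vector on a finset ground set. -/
def fsupp (X : Finset ℕ) (x : {a // a ∈ X} → ZMod 2) : Finset ℕ :=
  (X.attach.filter (fun a => x a = 1)).image Subtype.val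

lemma fsupp_subset (X : Finset ℕ) (x : {a // a ∈ X} → ZMod 2) : fsupp X x ⊆ X := by
  intro a ha
  simp only [fsupp, mem_image, mem_filter] at ha
  obtain ⟨b, _, rfl⟩ := ha
  exact b.2

lemma zmod2_cases (x : ZMod 2) : x = 0 ∨ x = 1 := by
  fin_cases x
  · exact Or.inl rfl
  · exact Or.inr rfl

lemma mem_fsupp_iff {X : Finset ℕ} {x : {a // a ∈ X} → ZMod 2} {a : ℕ} :
    a ∈ fsupp X x ↔ ∃ h : a ∈ X, x ⟨a, h⟩ = 1 := by
  simp only [fsupp, mem_image, mem_filter, mem_attach, true_and]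
  constructor
  · rintro ⟨b, hb, rfl⟩
    exact ⟨b.2, hb⟩
  · rintro ⟨h, hx⟩
    exact ⟨⟨a, h⟩, hx, rfl⟩

lemma fsupp_nonempty {X : Finset ℕ} {x : {a // a ∈ X} → ZMod 2} (hx : x ≠ 0) :
    (fsupp X x).Nonempty := by
  by_contra h
  rw [Finset.not_nonempty_iff_eq_empty] at h
  apply hx
  funext a
  rcases zmod2_cases (x a) with h0 | h1
  · exact h0
  · exfalso
    have : (a : ℕ) ∈ fsupp X x := mem_fsupp_iff.2 ⟨a.2, by simpa using h1⟩
    simp [h] at this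

lemma sum_eq_card (X : Finset ℕ) (x : {a // a ∈ X} → ZMod 2) (Q : Finset ℕ) :
    ∑ a ∈ X.attach.filter (fun a => a.1 ∈ Q), x a
      = (((fsupp X x ∩ Q).card : ℕ) : ZMod 2) := by
  classical
  have h1 : ∑ a ∈ (X.attach.filter (fun a => a.1 ∈ Q)).filter (fun a => x a = 1), x a
      = ∑ a ∈ X.attach.filter (fun a => a.1 ∈ Q), x a := by
    apply Finset.sum_filter_of_ne
    intro a _ hxa
    rcases zmod2_cases (x a) with h0 | h1
    · exact absurd h0 hxa
    · exact h1
  rw [← h1]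
  have h2 : ∀ a ∈ (X.attach.filter (fun a => a.1 ∈ Q)).filter (fun a => x a = 1), x a = 1 := by
    intro a ha
    exact (Finset.mem_filter.1 ha).2
  rw [Finset.sum_congr rfl h2, Finset.sum_const, nsmul_eq_mul, mul_one]
  congr 1
  have himg : fsupp X x ∩ Q
      = ((X.attach.filter (fun a => a.1 ∈ Q)).filter (fun a => x a = 1)).image Subtype.val := by
    ext a
    simp only [Finset.mem_inter, mem_fsupp_iff, Finset.mem_image, Finset.mem_filter,
      Finset.mem_attach, true_and]
    constructor
    · rintro ⟨⟨h, hx⟩, haQ⟩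
      exact ⟨⟨a, h⟩, ⟨haQ, hx⟩, rfl⟩
    · rintro ⟨b, ⟨hbQ, hbx⟩, rfl⟩
      exact ⟨⟨b.2, hbx⟩, hbQ⟩
  rw [himg, Finset.card_image_of_injective _ Subtype.val_injective]


lemma even_iff_cast_zero (n : ℕ) : (n : ZMod 2) = 0 ↔ Even n := by
  rw [ZMod.natCast_eq_zero_iff]
  exact ⟨fun h => even_iff_two_dvd.2 h, fun h => even_iff_two_dvd.1 h⟩

lemma claimA {ι : Type} [Fintype ι] [DecidableEq ι] (X : Finset ℕ) (Q : ι → Finset ℕ)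
    (hQX : ∀ j, Q j ⊆ X) (hcov : ∀ a ∈ X, ∃ j, a ∈ Q j) (i : ι)
    (hsz : Fintype.card ι ≤ (Q i).card) :
    (∃ w, w ⊆ X ∧ (∀ j, Even ((w ∩ Q j).card)) ∧ (w ∩ Q i).Nonempty) ∨ X ⊆ Q i := by
  classical
  by_cases hW : ∃ w, w ⊆ X ∧ (∀ j, Even ((w ∩ Q j).card)) ∧ (w ∩ Q i).Nonempty
  · exact Or.inl hW
  right
  push_neg at hW
  -- the parity map
  set Ψ : ({a // a ∈ X} → ZMod 2) → (ι → ZMod 2) :=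
    fun x j => ∑ a ∈ X.attach.filter (fun a => a.1 ∈ Q j), x a with hΨ
  have hΨsub : ∀ (x y : {a // a ∈ X} → ZMod 2) (j : ι), Ψ (x - y) j = Ψ x j - Ψ y j := by
    intro x y j
    simp only [hΨ, Pi.sub_apply, Finset.sum_sub_distrib]
  set Ker : Finset ({a // a ∈ X} → ZMod 2) :=
    Finset.univ.filter (fun x => ∀ j, Ψ x j = 0) with hKer
  set Zf : Finset ({a // a ∈ X} → ZMod 2) :=
    Finset.univ.filter (fun x => ∀ a : {a // a ∈ X}, a.1 ∈ Q i → x a = 0) with hZf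
  -- Step 1 : Ker ⊆ Zf
  have hKerZ : Ker ⊆ Zf := by
    intro x hx
    simp only [hKer, Finset.mem_filter, Finset.mem_univ, true_and] at hx
    have heven : ∀ j, Even ((fsupp X x ∩ Q j).card) := by
      intro j
      rw [← even_iff_cast_zero, ← sum_eq_card]
      exact hx j
    have hempty : fsupp X x ∩ Q i = ∅ := by
      rw [← Finset.not_nonempty_iff_eq_empty]
      exact Finset.not_nonempty_iff_eq_empty.2 (hW _ (fsupp_subset X x) heven)
    simp only [hZf, Finset.mem_filter, Finset.mem_univ, true_and]
    intro a haQ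
    rcases zmod2_cases (x a) with h0 | h1
    · exact h0
    exfalso
    have : a.1 ∈ fsupp X x ∩ Q i := Finset.mem_inter.2 ⟨mem_fsupp_iff.2 ⟨a.2, by simpa using h1⟩, haQ⟩
    simp [hempty] at this
  -- Step 2 : card bound for Zf
  have hZcard : Zf.card ≤ 2 ^ (X.card - (Q i).card) := by
    have : Zf.card ≤ Fintype.card ({a // a ∈ X \ Q i} → ZMod 2) := by
      rw [← Finset.card_univ]
      apply Finset.card_le_card_of_injOn
        (fun x => (fun b => x ⟨b.1, Finset.mem_sdiff.1 b.2 |>.1⟩))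
      · intro x _; exact Finset.mem_univ _
      · intro x hx y hy hxy
        simp only [hZf, Finset.mem_coe, Finset.mem_filter] at hx hy
        funext a
        by_cases ha : a.1 ∈ Q i
        · rw [hx.2 a ha, hy.2 a ha]
        · have := congrFun hxy ⟨a.1, Finset.mem_sdiff.2 ⟨a.2, ha⟩⟩
          simpa using this
    calc Zf.card ≤ _ := this
      _ = 2 ^ (X.card - (Q i).card) := by
          rw [Fintype.card_fun, ZMod.card, Fintype.card_coe, Finset.card_sdiff_of_subset (hQX i)]
  -- Step 3 : lower bound for Ker via fibers
  have hKercard : 2 ^ X.card ≤ 2 ^ (Fintype.card ι) * Ker.card := by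
    have hcardV : Fintype.card ({a // a ∈ X} → ZMod 2) = 2 ^ X.card := by
      rw [Fintype.card_fun, ZMod.card, Fintype.card_coe]
    have hfib : ∀ b ∈ Finset.univ.image Ψ,
        (Finset.univ.filter (fun x => Ψ x = b)).card ≤ Ker.card := by
      intro b hb
      obtain ⟨x₀, _, hx₀⟩ := Finset.mem_image.1 hb
      apply Finset.card_le_card_of_injOn (fun x => x - x₀)
      · intro x hx
        simp only [Finset.mem_coe, Finset.mem_filter, Finset.mem_univ, true_and] at hx ⊢
        simp only [hKer, Finset.mem_filter, Finset.mem_univ, true_and]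
        intro j
        rw [hΨsub, hx, hx₀, sub_self]
      · intro x _ y _ hxy
        exact sub_left_injective hxy
    calc 2 ^ X.card = Fintype.card ({a // a ∈ X} → ZMod 2) := hcardV.symm
      _ = (Finset.univ : Finset ({a // a ∈ X} → ZMod 2)).card := (Finset.card_univ).symm
      _ = ∑ b ∈ Finset.univ.image Ψ, (Finset.univ.filter (fun x => Ψ x = b)).card :=
          Finset.card_eq_sum_card_image Ψ Finset.univ
      _ ≤ (Finset.univ.image Ψ).card * Ker.card := by
          rw [← smul_eq_mul]
          exact Finset.sum_le_card_nsmul _ _ _ hfib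
      _ ≤ 2 ^ (Fintype.card ι) * Ker.card := by
          apply Nat.mul_le_mul_right
          calc (Finset.univ.image Ψ).card ≤ (Finset.univ : Finset (ι → ZMod 2)).card :=
                Finset.card_le_univ _
            _ = 2 ^ (Fintype.card ι) := by rw [Finset.card_univ, Fintype.card_fun, ZMod.card]
  -- Step 4 : conclude Q i has card = card ι and Ker = Zf
  have hQiX : (Q i).card ≤ X.card := Finset.card_le_card (hQX i)
  have hchain : 2 ^ X.card ≤ 2 ^ (Fintype.card ι) * 2 ^ (X.card - (Q i).card) := by
    calc 2 ^ X.card ≤ 2 ^ (Fintype.card ι) * Ker.card := hKercard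
      _ ≤ 2 ^ (Fintype.card ι) * Zf.card := Nat.mul_le_mul_left _ (Finset.card_le_card hKerZ)
      _ ≤ _ := Nat.mul_le_mul_left _ hZcard
  rw [← pow_add] at hchain
  have hexp : X.card ≤ Fintype.card ι + (X.card - (Q i).card) :=
    (Nat.pow_le_pow_iff_right (by norm_num)).1 hchain
  have hQs : (Q i).card = Fintype.card ι := by omega
  have hsX : Fintype.card ι ≤ X.card := hQs ▸ hQiX
  have hKerGe : 2 ^ (X.card - Fintype.card ι) ≤ Ker.card := by
    have h2 : 2 ^ X.card = 2 ^ (Fintype.card ι) * 2 ^ (X.card - Fintype.card ι) := by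
      rw [← pow_add]
      congr 1
      omega
    rw [h2] at hKercard
    exact Nat.le_of_mul_le_mul_left hKercard (by positivity)
  have hKerEq : Ker = Zf := by
    apply Finset.eq_of_subset_of_card_le hKerZ
    calc Zf.card ≤ 2 ^ (X.card - (Q i).card) := hZcard
      _ = 2 ^ (X.card - Fintype.card ι) := by rw [hQs]
      _ ≤ Ker.card := hKerGe
  -- Step 5 : conclude X ⊆ Q i
  intro z hz
  by_contra hzQ
  set ez : {a // a ∈ X} → ZMod 2 := fun a => if a = (⟨z, hz⟩ : {a // a ∈ X}) then 1 else 0 with hez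
  have hezZ : ez ∈ Zf := by
    simp only [hZf, Finset.mem_filter, Finset.mem_univ, true_and]
    intro a haQ
    have : a ≠ ⟨z, hz⟩ := by
      intro h
      rw [h] at haQ
      exact hzQ haQ
    simp [hez, this]
  have hezK : ez ∈ Ker := hKerEq ▸ hezZ
  simp only [hKer, Finset.mem_filter, Finset.mem_univ, true_and] at hezK
  obtain ⟨j₀, hj₀⟩ := hcov z hz
  have : Ψ ez j₀ = 1 := by
    simp only [hΨ, hez]
    rw [Finset.sum_ite_eq' (X.attach.filter (fun a => a.1 ∈ Q j₀)) (⟨z, hz⟩ : {a // a ∈ X})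
      (fun _ => (1 : ZMod 2))]
    simp [hj₀]
  rw [hezK j₀] at this
  exact zero_ne_one this
lemma odd_iff_cast_one (n : ℕ) : ((n : ZMod 2) = 1) ↔ Odd n := by
  rw [← Nat.not_even_iff_odd, ← even_iff_cast_zero]
  constructor
  · intro h h0
    rw [h0] at h
    exact one_ne_zero h.symm
  · intro h
    rcases zmod2_cases (n : ZMod 2) with h0 | h1
    · exact absurd h0 h
    · exact h1

lemma evenHit (Ps : Finset (Finset ℕ))
    (h1 : ∀ P ∈ Ps, Ps.card ≤ P.card) (h2 : ∀ P ∈ Ps, 2 ≤ P.card) :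
    ∃ S : Finset ℕ, ∀ P ∈ Ps, Even ((S ∩ P).card) ∧ (S ∩ P).Nonempty := by
  classical
  rcases Nat.lt_or_ge Ps.card 2 with hs | hs
  · -- at most one palette
    rcases Nat.lt_or_ge Ps.card 1 with hs0 | hs1
    · refine ⟨∅, fun P hP => absurd hP ?_⟩
      have : Ps = ∅ := Finset.card_eq_zero.1 (by omega)
      simp [this]
    · have hcard1 : Ps.card = 1 := by omega
      obtain ⟨P₀, hP₀⟩ := Finset.card_eq_one.1 hcard1
      have h2P : 2 ≤ P₀.card := h2 P₀ (by simp [hP₀])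
      obtain ⟨a, ha, b, hb, hab⟩ := Finset.one_lt_card.1 (show 1 < P₀.card by omega)
      refine ⟨{a, b}, fun P hP => ?_⟩
      have hPP : P = P₀ := by
        rw [hP₀] at hP
        simpa using hP
      subst hPP
      have hsub : ({a, b} : Finset ℕ) ⊆ P := by
        intro x hx
        rcases Finset.mem_insert.1 hx with rfl | hx
        · exact ha
        · rw [Finset.mem_singleton.1 hx]; exact hb
      rw [Finset.inter_eq_left.2 hsub]
      constructor
      · rw [Finset.card_insert_of_notMem (by simpa using hab), Finset.card_singleton]
        exact even_two
      · exact ⟨a, by simp⟩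
  -- main case : at least two palettes
  set U := Ps.sup id with hU
  have hPU : ∀ P ∈ Ps, P ⊆ U := fun P hP => Finset.le_sup (f := id) hP
  have hmemU : ∀ a, a ∈ U ↔ ∃ P ∈ Ps, a ∈ P := by
    intro a
    simp [hU, Finset.mem_sup]
  set W := (U.powerset).filter (fun S => ∀ P ∈ Ps, Even ((S ∩ P).card)) with hW
  have hWne : W.Nonempty := ⟨∅, by simp [hW]⟩
  obtain ⟨S, hSW, hSmax⟩ := W.exists_max_image Finset.card hWne
  have hSW' := hSW
  simp only [hW, Finset.mem_filter, Finset.mem_powerset] at hSW'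
  obtain ⟨hSU, hSeven⟩ := hSW'
  by_cases hhit : ∀ P ∈ Ps, (S ∩ P).Nonempty
  · exact ⟨S, fun P hP => ⟨hSeven P hP, hhit P hP⟩⟩
  push_neg at hhit
  obtain ⟨Pm, hPm, hPmne⟩ := hhit
  -- any missed set equals U \ S
  have hdeg : ∀ P ∈ Ps, S ∩ P = ∅ → U \ S = P := by
    intro P hP hmiss
    have hQX : ∀ j : {Q // Q ∈ Ps}, j.1 \ S ⊆ U \ S := by
      intro j
      exact Finset.sdiff_subset_sdiff (hPU j.1 j.2) (le_refl S)
    have hcov : ∀ a ∈ U \ S, ∃ j : {Q // Q ∈ Ps}, a ∈ j.1 \ S := by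
      intro a ha
      obtain ⟨haU, haS⟩ := Finset.mem_sdiff.1 ha
      obtain ⟨P', hP', haP'⟩ := (hmemU a).1 haU
      exact ⟨⟨P', hP'⟩, Finset.mem_sdiff.2 ⟨haP', haS⟩⟩
    have hPS : P \ S = P := by
      rw [Finset.sdiff_eq_self_iff_disjoint]
      rw [Finset.disjoint_right]
      intro a haS haP
      have : a ∈ S ∩ P := Finset.mem_inter.2 ⟨haS, haP⟩
      simp [hmiss] at this
    have hsz : Fintype.card {Q // Q ∈ Ps} ≤ ((fun j : {Q // Q ∈ Ps} => j.1 \ S) ⟨P, hP⟩).card := by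
      simp only [hPS]
      rw [Fintype.card_coe]
      exact h1 P hP
    rcases claimA (U \ S) (fun j : {Q // Q ∈ Ps} => j.1 \ S) hQX hcov ⟨P, hP⟩ hsz with
      ⟨w, hwX, hwEven, hwHit⟩ | hright
    · -- contradiction with maximality
      exfalso
      have hdisj : Disjoint S w := by
        rw [Finset.disjoint_right]
        intro a haw haS
        exact (Finset.mem_sdiff.1 (hwX haw)).2 haS
      have hwP : ∀ P' ∈ Ps, w ∩ P' = w ∩ (P' \ S) := by
        intro P' _
        ext a
        simp only [Finset.mem_inter, Finset.mem_sdiff]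
        exact ⟨fun ⟨h1', h2'⟩ => ⟨h1', h2', (Finset.mem_sdiff.1 (hwX h1')).2⟩,
          fun ⟨h1', h2', _⟩ => ⟨h1', h2'⟩⟩
      have hSW2 : S ∪ w ∈ W := by
        simp only [hW, Finset.mem_filter, Finset.mem_powerset]
        constructor
        · exact Finset.union_subset hSU (hwX.trans (Finset.sdiff_subset))
        · intro P' hP'
          rw [Finset.union_inter_distrib_right, Finset.card_union_of_disjoint
            (Finset.disjoint_of_subset_left (Finset.inter_subset_left)
              (Finset.disjoint_of_subset_right (Finset.inter_subset_left) hdisj))]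
          have := hwEven ⟨P', hP'⟩
          rw [hwP P' hP']
          exact (hSeven P' hP').add this
      have hwne : w.Nonempty := by
        obtain ⟨a, ha⟩ := hwHit
        exact ⟨a, (Finset.mem_inter.1 ha).1⟩
      have hcardlt : S.card < (S ∪ w).card := by
        rw [Finset.card_union_of_disjoint hdisj]
        have := Finset.card_pos.2 hwne
        omega
      exact absurd (hSmax _ hSW2) (by omega)
    · -- degenerate : U \ S = P
      apply Finset.Subset.antisymm
      · exact hright.trans (Finset.sdiff_subset)
      · intro a haP
        refine Finset.mem_sdiff.2 ⟨hPU P hP haP, fun haS => ?_⟩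
        have : a ∈ S ∩ P := Finset.mem_inter.2 ⟨haS, haP⟩
        simp [hmiss] at this
  have hUS : U \ S = Pm := hdeg Pm hPm hPmne
  have huniq : ∀ P ∈ Ps, P ≠ Pm → (S ∩ P).Nonempty := by
    intro P hP hne
    by_contra hmiss
    rw [Finset.not_nonempty_iff_eq_empty] at hmiss
    exact hne ((hdeg P hP hmiss).symm.trans hUS)
  by_cases hker : ∃ u, u ⊆ Pm ∧ u.Nonempty ∧ ∀ P ∈ Ps, Even ((u ∩ P).card)
  · -- enlarge S by a kernel element
    obtain ⟨u, huPm, hune, huEven⟩ := hker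
    have hdisj : Disjoint S u := by
      rw [Finset.disjoint_right]
      intro a hau haS
      exact (Finset.mem_sdiff.1 (hUS ▸ huPm hau : a ∈ U \ S)).2 haS
    refine ⟨S ∪ u, fun P hP => ?_⟩
    rw [Finset.union_inter_distrib_right, Finset.card_union_of_disjoint
      (Finset.disjoint_of_subset_left (Finset.inter_subset_left)
        (Finset.disjoint_of_subset_right (Finset.inter_subset_left) hdisj))]
    constructor
    · exact (hSeven P hP).add (huEven P hP)
    · by_cases hPPm : P = Pm
      · subst hPPm
        refine Finset.Nonempty.mono (Finset.subset_union_right) ?_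
        rwa [Finset.inter_eq_left.2 huPm]
      · exact Finset.Nonempty.mono (Finset.subset_union_left) (huniq P hP hPPm)
  · -- injective case
    push_neg at hker
    set φ : ({a // a ∈ Pm} → ZMod 2) → ({Q // Q ∈ Ps} → ZMod 2) :=
      fun x j => ∑ a ∈ Pm.attach.filter (fun a => a.1 ∈ j.1), x a with hφ
    have hinj : Function.Injective φ := by
      intro x y hxy
      by_contra hne
      have hd : x - y ≠ 0 := sub_ne_zero_of_ne hne
      have heven : ∀ P ∈ Ps, Even ((fsupp Pm (x - y) ∩ P).card) := by
        intro P hP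
        rw [← even_iff_cast_zero, ← sum_eq_card]
        have hsub2 : φ (x - y) ⟨P, hP⟩ = φ x ⟨P, hP⟩ - φ y ⟨P, hP⟩ := by
          simp only [hφ, Pi.sub_apply, Finset.sum_sub_distrib]
        have h0 : φ (x - y) ⟨P, hP⟩ = 0 := by rw [hsub2, hxy, sub_self]
        exact h0
      obtain ⟨P', hP', hodd⟩ := hker (fsupp Pm (x - y)) (fsupp_subset _ _) (fsupp_nonempty hd)
      exact hodd (heven P' hP')
    have hPmS : Pm.card ≤ Ps.card := by
      have hc := Fintype.card_le_of_injective φ hinj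
      rw [Fintype.card_fun, Fintype.card_fun, ZMod.card, Fintype.card_coe, Fintype.card_coe]
        at hc
      exact (Nat.pow_le_pow_iff_right (by norm_num)).1 hc
    have hPmeq : Pm.card = Ps.card := le_antisymm hPmS (h1 Pm hPm)
    have hsurj : Function.Surjective φ := by
      have := (Fintype.bijective_iff_injective_and_card φ).2 ⟨hinj, by
        rw [Fintype.card_fun, Fintype.card_fun, ZMod.card, Fintype.card_coe, Fintype.card_coe,
          hPmeq]⟩
      exact this.surjective
    -- S is nonempty
    have hSne : S.Nonempty := by
      obtain ⟨P₁, hP₁, P₂, hP₂, hP12⟩ := Finset.one_lt_card.1 hs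
      by_cases h : P₁ = Pm
      · obtain ⟨a, ha⟩ := huniq P₂ hP₂ (by rw [← h]; exact fun hh => hP12 hh.symm)
        exact ⟨a, (Finset.mem_inter.1 ha).1⟩
      · obtain ⟨a, ha⟩ := huniq P₁ hP₁ h
        exact ⟨a, (Finset.mem_inter.1 ha).1⟩
    obtain ⟨z, hzS⟩ := hSne
    obtain ⟨x, hx⟩ := hsurj (fun j => if z ∈ j.1 then (1 : ZMod 2) else 0)
    set u := fsupp Pm x with hu
    have huPm : u ⊆ Pm := fsupp_subset _ _
    have hub : ∀ P, ∀ hP : P ∈ Ps, (((u ∩ P).card : ℕ) : ZMod 2)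
        = if z ∈ P then (1 : ZMod 2) else 0 := by
      intro P hP
      have hcf := congrFun hx ⟨P, hP⟩
      rw [← sum_eq_card Pm x P]
      exact hcf
    have hzU : z ∈ U := hSU hzS
    obtain ⟨P₀, hP₀, hzP₀⟩ := (hmemU z).1 hzU
    have hune : u.Nonempty := by
      by_contra h
      rw [Finset.not_nonempty_iff_eq_empty] at h
      have := hub P₀ hP₀
      rw [h, if_pos hzP₀] at this
      simp at this
    have hzPm : z ∉ Pm := by
      intro h
      have : z ∈ S ∩ Pm := Finset.mem_inter.2 ⟨hzS, h⟩
      simp [hPmne] at this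
    have hdisj : Disjoint S u := by
      rw [Finset.disjoint_right]
      intro a hau haS
      exact (Finset.mem_sdiff.1 (hUS ▸ huPm hau : a ∈ U \ S)).2 haS
    refine ⟨(S \ {z}) ∪ u, fun P hP => ?_⟩
    have hdisj2 : Disjoint ((S \ {z}) ∩ P) (u ∩ P) :=
      Finset.disjoint_of_subset_left (Finset.inter_subset_left)
        (Finset.disjoint_of_subset_right (Finset.inter_subset_left)
          (Finset.disjoint_of_subset_left (Finset.sdiff_subset) hdisj))
    rw [Finset.union_inter_distrib_right, Finset.card_union_of_disjoint hdisj2]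
    by_cases hzP : z ∈ P
    · have hPnePm : P ≠ Pm := fun h => hzPm (h ▸ hzP)
      have hA : (S \ {z}) ∩ P = (S ∩ P).erase z := by
        ext a
        simp only [Finset.mem_inter, Finset.mem_sdiff, Finset.mem_singleton, Finset.mem_erase]
        tauto
      have hzmem : z ∈ S ∩ P := Finset.mem_inter.2 ⟨hzS, hzP⟩
      have hcardA : ((S \ {z}) ∩ P).card = (S ∩ P).card - 1 := by
        rw [hA, Finset.card_erase_of_mem hzmem]
      have hcodd : Odd ((u ∩ P).card) := by
        rw [← odd_iff_cast_one, hub P hP, if_pos hzP]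
      have hceven := hSeven P hP
      have hpos : 1 ≤ (S ∩ P).card := Finset.card_pos.2 ⟨z, hzmem⟩
      have hc2 : 2 ≤ (S ∩ P).card := by
        rcases hceven with ⟨k, hk⟩
        omega
      constructor
      · rw [hcardA]
        rw [Nat.even_iff] at hceven ⊢
        rw [Nat.odd_iff] at hcodd
        omega
      · refine Finset.Nonempty.mono (Finset.subset_union_left) ?_
        rw [← Finset.card_pos, hcardA]
        omega
    · have hA : (S \ {z}) ∩ P = S ∩ P := by
        ext a
        simp only [Finset.mem_inter, Finset.mem_sdiff, Finset.mem_singleton]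
        constructor
        · rintro ⟨⟨h1', _⟩, h2'⟩
          exact ⟨h1', h2'⟩
        · rintro ⟨h1', h2'⟩
          exact ⟨⟨h1', fun h => hzP (h ▸ h2')⟩, h2'⟩
      have hceven2 : Even ((u ∩ P).card) := by
        rw [← even_iff_cast_zero, hub P hP, if_neg hzP]
      constructor
      · rw [hA]
        exact (hSeven P hP).add hceven2
      · by_cases hPPm : P = Pm
        · subst hPPm
          refine Finset.Nonempty.mono (Finset.subset_union_right) ?_
          rwa [Finset.inter_eq_left.2 huPm]
        · refine Finset.Nonempty.mono (Finset.subset_union_left) ?_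
          rw [hA]
          exact huniq P hP hPPm
end PaletteAux
open SimpleGraph

/-- `c` is a proper edge-coloring of `G`: distinct edges sharing a vertex
receive distinct colors. -/
def IsProperEdgeColoring {V : Type*} (G : SimpleGraph V) (c : Sym2 V → ℕ) : Prop :=
  ∀ e₁ ∈ G.edgeSet, ∀ e₂ ∈ G.edgeSet, e₁ ≠ e₂ → (∃ v, v ∈ e₁ ∧ v ∈ e₂) → c e₁ ≠ c e₂

/-- The palette of a vertex `v`: the set of colors of edges incident with `v`. -/
def palette {V : Type*} (G : SimpleGraph V) (c : Sym2 V → ℕ) (v : V) : Set ℕ :=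
  c '' (G.incidenceSet v)

/-- The number of distinct palettes occurring among the vertices. -/
noncomputable def numPalettes {V : Type*} (G : SimpleGraph V) (c : Sym2 V → ℕ) : ℕ :=
  (Set.range (palette G c)).ncard

/-- The palette index of `G`: the minimum number of distinct palettes over all
proper edge-colorings of `G`. -/
noncomputable def paletteIndex {V : Type*} (G : SimpleGraph V) : ℕ :=
  sInf { n | ∃ c, IsProperEdgeColoring G c ∧ numPalettes G c = n }

/-- `G` has a spanning even subgraph without isolated vertices. -/
def ExistsSpanningEvenNoIsolated {V : Type*} (G : SimpleGraph V) : Prop :=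
  ∃ K : SimpleGraph V, K ≤ G ∧ (∀ v, Even (K.neighborSet v).ncard) ∧
    (∀ v, 1 ≤ (K.neighborSet v).ncard)

open SimpleGraph

section GraphPart

variable {V : Type*} [Fintype V] [DecidableEq V] (G : SimpleGraph V) [DecidableRel G.Adj]

lemma key_lemma (c : Sym2 V → ℕ) (hc : IsProperEdgeColoring G c)
    (hdelta : 2 ≤ G.maxDegree) (hno : ¬ ExistsSpanningEvenNoIsolated G) :
    G.minDegree < numPalettes G c := by
  classical
  have hV : Nonempty V := by
    by_contra h
    rw [not_nonempty_iff] at h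
    have h0 : G.maxDegree = 0 := by
      simp only [SimpleGraph.maxDegree, Finset.univ_eq_empty, Finset.image_empty,
        Finset.max_empty]
      rfl
    omega
  set pal : V → Finset ℕ := fun v => (G.incidenceFinset v).image c with hpal
  have hpalcoe : ∀ v, palette G c v = ↑(pal v) := by
    intro v
    rw [hpal]
    simp only [Finset.coe_image]
    rw [palette]
    congr 1
    simp [incidenceFinset, Set.coe_toFinset]
  have hinjOn : ∀ v, Set.InjOn c (G.incidenceSet v) := by
    intro v e₁ he₁ e₂ he₂ heq
    by_contra hne
    obtain ⟨he₁e, hv₁⟩ := he₁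
    obtain ⟨he₂e, hv₂⟩ := he₂
    exact hc e₁ he₁e e₂ he₂e hne ⟨v, hv₁, hv₂⟩ heq
  have hcardpal : ∀ v, (pal v).card = G.degree v := by
    intro v
    rw [hpal]
    simp only
    rw [Finset.card_image_of_injOn (by
      intro e₁ he₁ e₂ he₂ heq
      apply hinjOn v _ _ heq
      · rwa [← mem_incidenceFinset]
      · rwa [← mem_incidenceFinset])]
    exact G.card_incidenceFinset_eq_degree v
  set PsF : Finset (Finset ℕ) := Finset.univ.image pal with hPsF
  have hnum : numPalettes G c = PsF.card := by
    rw [numPalettes]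
    have hrange : Set.range (palette G c) = (fun F : Finset ℕ => (F : Set ℕ)) '' (↑PsF) := by
      ext x
      simp only [Set.mem_range, Set.mem_image, hPsF, Finset.coe_image, Finset.coe_univ,
        Set.image_univ, Set.mem_range]
      constructor
      · rintro ⟨v, rfl⟩
        exact ⟨pal v, ⟨v, rfl⟩, (hpalcoe v).symm⟩
      · rintro ⟨F, ⟨v, rfl⟩, rfl⟩
        exact ⟨v, hpalcoe v⟩
    rw [hrange, Set.ncard_image_of_injOn (Set.injOn_of_injective Finset.coe_injective),
      Set.ncard_coe_finset]
  by_contra hle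
  push_neg at hle
  rw [hnum] at hle
  -- hypotheses of the combinatorial lemma
  have h1 : ∀ P ∈ PsF, PsF.card ≤ P.card := by
    intro P hP
    obtain ⟨v, _, rfl⟩ := Finset.mem_image.1 hP
    rw [hcardpal]
    exact le_trans hle (G.minDegree_le_degree v)
  obtain ⟨w, hw⟩ := G.exists_maximal_degree_vertex
  have h2 : ∀ P ∈ PsF, 2 ≤ P.card := by
    intro P hP
    obtain ⟨v, _, rfl⟩ := Finset.mem_image.1 hP
    rw [hcardpal]
    by_cases hd : 2 ≤ G.degree v
    · exact hd
    · push_neg at hd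
      have hδ : G.minDegree ≤ 1 := le_trans (G.minDegree_le_degree v) (by omega)
      have hpos : 1 ≤ PsF.card :=
        Finset.card_pos.2 ⟨pal v, Finset.mem_image_of_mem pal (Finset.mem_univ v)⟩
      have hcard1 : PsF.card ≤ 1 := by omega
      have hvw : pal v = pal w :=
        Finset.card_le_one.1 hcard1 _ (Finset.mem_image_of_mem pal (Finset.mem_univ v))
          _ (Finset.mem_image_of_mem pal (Finset.mem_univ w))
      have hdeg : G.degree v = G.degree w := by
        rw [← hcardpal v, hvw, hcardpal w]
      rw [hdeg, ← hw]
      exact hdelta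
  obtain ⟨S, hS⟩ := PaletteAux.evenHit PsF h1 h2
  -- build the even spanning subgraph
  set K : SimpleGraph V := {
    Adj := fun u w' => G.Adj u w' ∧ c s(u, w') ∈ S
    symm := by
      constructor
      intro u w' ⟨h, hcS⟩
      refine ⟨h.symm, ?_⟩
      rwa [Sym2.eq_swap]
    loopless := ⟨fun v h => G.loopless.irrefl v h.1⟩ } with hK
  have hKG : K ≤ G := by
    intro u v h
    exact h.1
  have hncard : ∀ v, (K.neighborSet v).ncard = (S ∩ pal v).card := by
    intro v
    have hinj2 : Set.InjOn (fun u => c s(v, u)) (K.neighborSet v) := by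
      intro u₁ hu₁ u₂ hu₂ heq
      have ha₁ : G.Adj v u₁ := (hu₁ : K.Adj v u₁).1
      have ha₂ : G.Adj v u₂ := (hu₂ : K.Adj v u₂).1
      have hmem₁ : s(v, u₁) ∈ G.incidenceSet v := ⟨ha₁, Sym2.mem_mk_left _ _⟩
      have hmem₂ : s(v, u₂) ∈ G.incidenceSet v := ⟨ha₂, Sym2.mem_mk_left _ _⟩
      have := hinjOn v hmem₁ hmem₂ heq
      exact Sym2.congr_right.1 this
    have himg : (fun u => c s(v, u)) '' (K.neighborSet v) = ↑(S ∩ pal v) := by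
      ext x
      constructor
      · rintro ⟨u, hu, rfl⟩
        have ha : K.Adj v u := hu
        simp only [Finset.coe_inter, Set.mem_inter_iff, Finset.mem_coe]
        refine ⟨ha.2, ?_⟩
        rw [hpal]
        simp only [Finset.mem_image]
        refine ⟨s(v, u), ?_, rfl⟩
        rw [mem_incidenceFinset]
        exact ⟨ha.1, Sym2.mem_mk_left _ _⟩
      · intro hx
        simp only [Finset.coe_inter, Set.mem_inter_iff, Finset.mem_coe] at hx
        obtain ⟨hxS, hxpal⟩ := hx
        rw [hpal] at hxpal
        simp only [Finset.mem_image] at hxpal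
        obtain ⟨e, he, rfl⟩ := hxpal
        rw [mem_incidenceFinset] at he
        obtain ⟨hee, hve⟩ := he
        obtain ⟨u, rfl⟩ := Sym2.mem_iff_exists.1 hve
        have hadj : G.Adj v u := G.mem_edgeSet.1 hee
        exact ⟨u, show K.Adj v u from ⟨hadj, hxS⟩, rfl⟩
    rw [← Set.ncard_coe_finset, ← himg, Set.ncard_image_of_injOn hinj2]
  apply hno
  refine ⟨K, hKG, fun v => ?_, fun v => ?_⟩
  · rw [hncard]
    exact (hS (pal v) (Finset.mem_image_of_mem pal (Finset.mem_univ v))).1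
  · rw [hncard]
    exact Finset.card_pos.2 (hS (pal v) (Finset.mem_image_of_mem pal (Finset.mem_univ v))).2

end GraphPart

theorem palette_index_gt_min_degree {V : Type*} [Fintype V] (G : SimpleGraph V)
    [DecidableRel G.Adj] (hdelta : 2 ≤ G.maxDegree)
    (hno : ¬ ExistsSpanningEvenNoIsolated G) :
    G.minDegree < paletteIndex G := by
  classical
  obtain ⟨f, hf⟩ := exists_injective_nat (Sym2 V)
  have hne : {n | ∃ c, IsProperEdgeColoring G c ∧ numPalettes G c = n}.Nonempty :=
    ⟨numPalettes G f, f, fun e₁ _ e₂ _ hne _ hcc => hne (hf hcc), rfl⟩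
  obtain ⟨c, hc, hcn⟩ := Nat.sInf_mem hne
  rw [paletteIndex, ← hcn]
  exact key_lemma G c hc hdelta hno
end

section
/- Let G be a finite simple graph with maximum degree Δ(G) ≥ 2 such that G has no spanning even subgraph without isolated vertices. Then every proper edge-coloring of G uses strictly more than δ(G) colors, where δ(G) is the minimum degree of G. -/
open SimpleGraph

theorem num_colors_gt_min_degree {V : Type*} [Fintype V] (G : SimpleGraph V)
    [DecidableRel G.Adj] (hdelta : 2 ≤ G.maxDegree)
    (hno : ¬ ExistsSpanningEvenNoIsolated G)
    (c : Sym2 V → ℕ) (hc : IsProperEdgeColoring G c) :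
    G.minDegree < (c '' G.edgeSet).ncard := by
  classical
  by_contra hle
  push_neg at hle
  -- V is nonempty
  have hne : Nonempty V := by
    by_contra hV
    rw [not_nonempty_iff] at hV
    have : G.maxDegree = 0 := by
      simp [SimpleGraph.maxDegree, Finset.univ_eq_empty]
    omega
  -- injectivity of c on incidence sets
  have hinj : ∀ v : V, Set.InjOn c (G.incidenceSet v) := by
    intro v e1 he1 e2 he2 hcc
    by_contra hnee
    exact hc e1 he1.1 e2 he2.1 hnee ⟨v, he1.2, he2.2⟩ hcc
  have hcard : ∀ v : V, (G.incidenceSet v).ncard = G.degree v := by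
    intro v
    rw [Set.ncard_eq_toFinset_card', ← SimpleGraph.card_incidenceFinset_eq_degree]
    congr 1
  -- every palette is the full color set
  have hpal : ∀ v : V, c '' G.incidenceSet v = c '' G.edgeSet := by
    intro v
    refine Set.eq_of_subset_of_ncard_le
      (Set.image_mono (G.incidenceSet_subset v)) ?_ (Set.toFinite _)
    rw [Set.ncard_image_of_injOn (hinj v), hcard]
    exact le_trans hle (G.minDegree_le_degree v)
  -- find two distinct colors a ≠ b
  obtain ⟨w, hw⟩ := G.exists_maximal_degree_vertex
  have hw2 : 2 ≤ G.degree w := hw ▸ hdelta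
  have h2 : 1 < (G.incidenceFinset w).card := by
    rwa [SimpleGraph.card_incidenceFinset_eq_degree]
  obtain ⟨e1, he1, e2, he2, hee⟩ := Finset.one_lt_card.mp h2
  rw [SimpleGraph.mem_incidenceFinset] at he1 he2
  have hab : c e1 ≠ c e2 := hc e1 he1.1 e2 he2.1 hee ⟨w, he1.2, he2.2⟩
  set a := c e1 with ha
  set b := c e2 with hb
  have haC : a ∈ c '' G.edgeSet := ⟨e1, he1.1, rfl⟩
  have hbC : b ∈ c '' G.edgeSet := ⟨e2, he2.1, rfl⟩
  -- the subgraph of a/b colored edges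
  set K : SimpleGraph V :=
    { Adj := fun u v => G.Adj u v ∧ (c s(u, v) = a ∨ c s(u, v) = b)
      symm := by
        constructor
        intro u v huv
        rwa [Sym2.eq_swap, adj_comm] at huv
      loopless := ⟨fun v hv => G.loopless.irrefl v hv.1⟩ } with hK
  have key : ∀ v : V, ∃ x y : V, x ≠ y ∧ K.neighborSet v = {x, y} := by
    intro v
    obtain ⟨ea, hea, hcea⟩ := (hpal v).symm ▸ haC
    obtain ⟨eb, heb, hceb⟩ := (hpal v).symm ▸ hbC
    obtain ⟨x, rfl⟩ := Sym2.mem_iff_exists.mp hea.2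
    obtain ⟨y, rfl⟩ := Sym2.mem_iff_exists.mp heb.2
    have hax : G.Adj v x := (SimpleGraph.mem_edgeSet G).mp hea.1
    have hby : G.Adj v y := (SimpleGraph.mem_edgeSet G).mp heb.1
    refine ⟨x, y, ?_, ?_⟩
    · rintro rfl
      exact hab (hcea ▸ hceb ▸ rfl)
    · ext z
      simp only [SimpleGraph.mem_neighborSet, Set.mem_insert_iff, Set.mem_singleton_iff]
      constructor
      · rintro ⟨hz, hcz | hcz⟩
        · left
          have : s(v, z) = s(v, x) := hinj v ⟨(SimpleGraph.mem_edgeSet G).mpr hz,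
            Sym2.mem_mk_left _ _⟩ ⟨hea.1, Sym2.mem_mk_left _ _⟩ (by rw [hcz, hcea])
          exact (Sym2.congr_right.mp this)
        · right
          have : s(v, z) = s(v, y) := hinj v ⟨(SimpleGraph.mem_edgeSet G).mpr hz,
            Sym2.mem_mk_left _ _⟩ ⟨heb.1, Sym2.mem_mk_left _ _⟩ (by rw [hcz, hceb])
          exact (Sym2.congr_right.mp this)
      · rintro (rfl | rfl)
        · exact ⟨hax, Or.inl hcea⟩
        · exact ⟨hby, Or.inr hceb⟩
  apply hno
  refine ⟨K, fun u v huv => huv.1, ?_, ?_⟩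
  -- neighbor sets are pairs
  · intro v
    obtain ⟨x, y, hxy, hset⟩ := key v
    rw [hset, Set.ncard_pair hxy]
    exact even_two
  · intro v
    obtain ⟨x, y, hxy, hset⟩ := key v
    rw [hset, Set.ncard_pair hxy]
    omega
end

section
/- Let G be a connected finite simple cubic (3-regular) graph. Then G is not 3-edge-colorable and G has a perfect matching if and only if the palette index of G equals 3, i.e., š(G) = 3. -/
set_option maxHeartbeats 1000000
set_option linter.unusedSectionVars false


open SimpleGraph

section PaletteAux

open SimpleGraph

/-! #### A greedy coloring gadget -/

noncomputable def greedyCol (adj : ℕ → ℕ → Prop) (n : ℕ) : ℕ :=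
  sInf {k : ℕ | ∀ m, m < n → adj m n → greedyCol adj m ≠ k}
termination_by n

lemma greedyCol_mem (adj : ℕ → ℕ → Prop) (n : ℕ) :
    ∀ m, m < n → adj m n → greedyCol adj m ≠ greedyCol adj n := by
  have hfin : ({k : ℕ | ∀ m, m < n → adj m n → greedyCol adj m ≠ k}ᶜ).Finite := by
    apply Set.Finite.subset ((Set.finite_Iio n).image (greedyCol adj))
    intro k hk
    simp only [Set.mem_compl_iff, Set.mem_setOf_eq, not_forall] at hk
    obtain ⟨m, hm, hadj, hne⟩ := hk
    simp only [not_ne_iff] at hne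
    exact ⟨m, hm, hne⟩
  have hne : {k : ℕ | ∀ m, m < n → adj m n → greedyCol adj m ≠ k}.Nonempty := by
    rcases (hfin.infinite_compl).nonempty with ⟨k, hk⟩
    exact ⟨k, by simpa using hk⟩
  have := Nat.sInf_mem hne
  rw [← greedyCol] at this
  exact this

lemma greedyCol_lt (adj : ℕ → ℕ → Prop) (n : ℕ)
    (hcard : {m : ℕ | m < n ∧ adj m n}.ncard ≤ 2) : greedyCol adj n < 3 := by
  have hfin : {m : ℕ | m < n ∧ adj m n}.Finite :=
    (Set.finite_Iio n).subset (fun m hm => hm.1)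
  set T := {m : ℕ | m < n ∧ adj m n} with hT
  have himg : ((greedyCol adj) '' T).ncard ≤ 2 :=
    le_trans (Set.ncard_image_le hfin) hcard
  have : ∃ k < 3, k ∉ (greedyCol adj) '' T := by
    by_contra h
    push_neg at h
    have hsub : Set.Iio 3 ⊆ (greedyCol adj) '' T := fun k hk => h k hk
    have hle := Set.ncard_le_ncard hsub (hfin.image _)
    have h3 : (Set.Iio 3 : Set ℕ) = {0, 1, 2} := by ext x; simp; omega
    rw [h3, Set.ncard_insert_of_notMem (by simp), Set.ncard_insert_of_notMem (by simp),
      Set.ncard_singleton] at hle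
    omega
  obtain ⟨k, hk3, hk⟩ := this
  have hkmem : k ∈ {k : ℕ | ∀ m, m < n → adj m n → greedyCol adj m ≠ k} := by
    intro m hm hadj hne
    exact hk ⟨m, ⟨hm, hadj⟩, hne⟩
  calc greedyCol adj n ≤ k := by rw [greedyCol]; exact Nat.sInf_le hkmem
    _ < 3 := hk3

/-! #### Pure set-theoretic counting lemmas -/

lemma ncard_split (A B C : Set ℕ) (hA : A.Finite) :
    A.ncard = (A \ (B ∪ C)).ncard + ((A ∩ B) \ C).ncard + ((A ∩ C) \ B).ncard
      + (A ∩ B ∩ C).ncard := by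
  have hdec : A = ((A \ (B ∪ C)) ∪ ((A ∩ B) \ C)) ∪ ((A ∩ C) \ B) ∪ (A ∩ B ∩ C) := by
    ext z
    simp only [Set.mem_union, Set.mem_diff, Set.mem_inter_iff]
    tauto
  have d12 : Disjoint (A \ (B ∪ C)) ((A ∩ B) \ C) := by
    rw [Set.disjoint_left]
    rintro z ⟨-, hz⟩ ⟨⟨-, hzB⟩, -⟩
    exact hz (Or.inl hzB)
  have d3 : Disjoint ((A \ (B ∪ C)) ∪ ((A ∩ B) \ C)) ((A ∩ C) \ B) := by
    rw [Set.disjoint_left]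
    rintro z (⟨-, hz⟩ | ⟨⟨-, hzB⟩, -⟩) ⟨⟨-, hzC⟩, hzB'⟩
    · exact hz (Or.inr hzC)
    · exact hzB' hzB
  have d4 : Disjoint (((A \ (B ∪ C)) ∪ ((A ∩ B) \ C)) ∪ ((A ∩ C) \ B)) (A ∩ B ∩ C) := by
    rw [Set.disjoint_left]
    rintro z ((⟨-, hz⟩ | ⟨-, hzC⟩) | ⟨-, hzB⟩) ⟨⟨-, hzB'⟩, hzC'⟩
    · exact hz (Or.inl hzB')
    · exact hzC hzC'
    · exact hzB hzB'
  calc A.ncard = ((((A \ (B ∪ C)) ∪ ((A ∩ B) \ C)) ∪ ((A ∩ C) \ B)) ∪ (A ∩ B ∩ C)).ncard := by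
        rw [← hdec]
    _ = _ := by
        rw [Set.ncard_union_eq d4 ((hA.diff.union (hA.inter_of_left _).diff).union
            (hA.inter_of_left _).diff) ((hA.inter_of_left _).inter_of_left _),
          Set.ncard_union_eq d3 (hA.diff.union (hA.inter_of_left _).diff)
            (hA.inter_of_left _).diff,
          Set.ncard_union_eq d12 hA.diff (hA.inter_of_left _).diff]

lemma inter_eq_single {Q S : Set ℕ} {x : ℕ} (hxQ : x ∈ Q) (hxS : x ∈ S)
    (h : ∀ z ∈ S, z ≠ x → z ∉ Q) : (Q ∩ S).ncard = 1 := by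
  have hQS : Q ∩ S = {x} := by
    ext z
    constructor
    · rintro ⟨hzQ, hzS⟩
      by_contra hne
      exact h z hzS hne hzQ
    · rintro rfl
      exact ⟨hxQ, hxS⟩
  rw [hQS, Set.ncard_singleton]

lemma exists_select (P1 P2 P3 : Set ℕ) (h1 : P1.Finite) (h2 : P2.Finite) (h3 : P3.Finite)
    (c1 : P1.ncard = 3) (c2 : P2.ncard = 3) (c3 : P3.ncard = 3) :
    ∃ S : Set ℕ, (P1 ∩ S).ncard = 1 ∧ (P2 ∩ S).ncard = 1 ∧ (P3 ∩ S).ncard = 1 := by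
  have e1 := ncard_split P1 P2 P3 h1
  have e2 := ncard_split P2 P1 P3 h2
  have e3 := ncard_split P3 P1 P2 h3
  rw [Set.inter_comm P2 P1] at e2
  rw [Set.inter_comm P3 P1, Set.inter_comm P3 P2, Set.inter_right_comm P1 P3 P2] at e3
  rw [c1] at e1; rw [c2] at e2; rw [c3] at e3
  have key : 1 ≤ (P1 ∩ P2 ∩ P3).ncard ∨
      (1 ≤ ((P1 ∩ P2) \ P3).ncard ∧ 1 ≤ (P3 \ (P1 ∪ P2)).ncard) ∨
      (1 ≤ ((P1 ∩ P3) \ P2).ncard ∧ 1 ≤ (P2 \ (P1 ∪ P3)).ncard) ∨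
      (1 ≤ ((P2 ∩ P3) \ P1).ncard ∧ 1 ≤ (P1 \ (P2 ∪ P3)).ncard) ∨
      (1 ≤ (P1 \ (P2 ∪ P3)).ncard ∧ 1 ≤ (P2 \ (P1 ∪ P3)).ncard ∧
        1 ≤ (P3 \ (P1 ∪ P2)).ncard) := by
    omega
  have hne : ∀ (s : Set ℕ), 1 ≤ s.ncard → s.Nonempty := by
    intro s hs
    exact Set.nonempty_of_ncard_ne_zero (by omega)
  rcases key with h | ⟨ha, hb⟩ | ⟨ha, hb⟩ | ⟨ha, hb⟩ | ⟨ha, hb, hcc⟩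
  · obtain ⟨x, ⟨hx1, hx2⟩, hx3⟩ := hne _ h
    refine ⟨{x}, ?_, ?_, ?_⟩ <;>
      exact inter_eq_single (by assumption) rfl
        (by rintro z rfl hne'; exact absurd rfl hne')
  · obtain ⟨x, ⟨hx1, hx2⟩, hx3⟩ := hne _ ha
    obtain ⟨y, hy3, hy12⟩ := hne _ hb
    have hy1 : y ∉ P1 := fun h => hy12 (Or.inl h)
    have hy2 : y ∉ P2 := fun h => hy12 (Or.inr h)
    refine ⟨{x, y}, inter_eq_single hx1 (Or.inl rfl) ?_, inter_eq_single hx2 (Or.inl rfl) ?_,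
      inter_eq_single hy3 (Or.inr rfl) ?_⟩ <;>
    · rintro z (rfl | rfl) hne' <;> first | (exact absurd rfl hne') | assumption
  · obtain ⟨x, ⟨hx1, hx3⟩, hx2⟩ := hne _ ha
    obtain ⟨y, hy2, hy13⟩ := hne _ hb
    have hy1 : y ∉ P1 := fun h => hy13 (Or.inl h)
    have hy3 : y ∉ P3 := fun h => hy13 (Or.inr h)
    refine ⟨{x, y}, inter_eq_single hx1 (Or.inl rfl) ?_, inter_eq_single hy2 (Or.inr rfl) ?_,
      inter_eq_single hx3 (Or.inl rfl) ?_⟩ <;>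
    · rintro z (rfl | rfl) hne' <;> first | (exact absurd rfl hne') | assumption
  · obtain ⟨x, ⟨hx2, hx3⟩, hx1⟩ := hne _ ha
    obtain ⟨y, hy1, hy23⟩ := hne _ hb
    have hy2 : y ∉ P2 := fun h => hy23 (Or.inl h)
    have hy3 : y ∉ P3 := fun h => hy23 (Or.inr h)
    refine ⟨{x, y}, inter_eq_single hy1 (Or.inr rfl) ?_, inter_eq_single hx2 (Or.inl rfl) ?_,
      inter_eq_single hx3 (Or.inl rfl) ?_⟩ <;>
    · rintro z (rfl | rfl) hne' <;> first | (exact absurd rfl hne') | assumption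
  · obtain ⟨x, hx1, hx23⟩ := hne _ ha
    obtain ⟨y, hy2, hy13⟩ := hne _ hb
    obtain ⟨z, hz3, hz12⟩ := hne _ hcc
    have hx2 : x ∉ P2 := fun h => hx23 (Or.inl h)
    have hx3 : x ∉ P3 := fun h => hx23 (Or.inr h)
    have hy1 : y ∉ P1 := fun h => hy13 (Or.inl h)
    have hy3 : y ∉ P3 := fun h => hy13 (Or.inr h)
    have hz1 : z ∉ P1 := fun h => hz12 (Or.inl h)
    have hz2 : z ∉ P2 := fun h => hz12 (Or.inr h)
    refine ⟨{x, y, z}, inter_eq_single hx1 (Or.inl rfl) ?_,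
      inter_eq_single hy2 (Or.inr (Or.inl rfl)) ?_,
      inter_eq_single hz3 (Or.inr (Or.inr rfl)) ?_⟩ <;>
    · rintro w (rfl | rfl | rfl) hne' <;> first | (exact absurd rfl hne') | assumption

/-! #### Basic palette lemmas -/

section Graph

variable {V : Type*} [Fintype V] {G : SimpleGraph V} {c : Sym2 V → ℕ}

lemma injOn_incidence (hc : IsProperEdgeColoring G c) (v : V) :
    Set.InjOn c (G.incidenceSet v) := by
  intro e1 h1 e2 h2 he
  by_contra hne
  exact hc e1 h1.1 e2 h2.1 hne ⟨v, h1.2, h2.2⟩ he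

lemma incidence_ncard [DecidableRel G.Adj] (hreg : G.IsRegularOfDegree 3) (v : V) :
    (G.incidenceSet v).ncard = 3 := by
  classical
  have h1 : Nat.card (G.incidenceSet v) = Nat.card (G.neighborSet v) :=
    Nat.card_congr (G.incidenceSetEquivNeighborSet v)
  have h2 : Nat.card (G.neighborSet v) = G.degree v := by
    rw [Nat.card_eq_fintype_card]
    exact G.card_neighborSet_eq_degree v
  rw [← Nat.card_coe_set_eq, h1, h2, hreg v]

lemma palette_ncard [DecidableRel G.Adj] (hc : IsProperEdgeColoring G c)
    (hreg : G.IsRegularOfDegree 3) (v : V) : (palette G c v).ncard = 3 := by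
  rw [palette, Set.ncard_image_of_injOn (injOn_incidence hc v), incidence_ncard hreg]

lemma palette_finite (v : V) : (palette G c v).Finite :=
  (Set.toFinite (G.incidenceSet v)).image c

lemma colors_sub_of_palette {P : Set ℕ} (hP : ∀ v, palette G c v = P) :
    ∀ e ∈ G.edgeSet, c e ∈ P := by
  intro e he
  induction e using Sym2.ind with
  | _ x y =>
    rw [← hP x]
    exact Set.mem_image_of_mem c ⟨he, Sym2.mem_mk_left x y⟩

lemma exists_lt3_of_colors_sub (hc : IsProperEdgeColoring G c)
    {a b d : ℕ} (hab : a ≠ b) (had : a ≠ d) (hbd : b ≠ d)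
    (hall : ∀ e ∈ G.edgeSet, c e ∈ ({a, b, d} : Set ℕ)) :
    ∃ c', IsProperEdgeColoring G c' ∧ ∀ e ∈ G.edgeSet, c' e < 3 := by
  classical
  set r : ℕ → ℕ := fun x => if x = a then 0 else if x = b then 1 else 2 with hr
  have hra : r a = 0 := by simp [hr]
  have hrb : r b = 1 := by simp [hr, hab.symm]
  have hrd : r d = 2 := by simp [hr, had.symm, hbd.symm]
  refine ⟨fun e => r (c e), ?_, ?_⟩
  · intro e1 h1 e2 h2 hne hshare
    have hc1 := hall e1 h1
    have hc2 := hall e2 h2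
    have hcc := hc e1 h1 e2 h2 hne hshare
    show r (c e1) ≠ r (c e2)
    simp only [Set.mem_insert_iff, Set.mem_singleton_iff] at hc1 hc2
    rcases hc1 with h | h | h <;> rcases hc2 with h' | h' | h' <;>
      rw [h, h'] <;> simp_all
  · intro e he
    simp only [hr]
    split_ifs <;> omega

lemma remap_two (hc : IsProperEdgeColoring G c) (A B : Set ℕ)
    (hAfin : A.Finite) (hBfin : B.Finite) (hcard : A.ncard = B.ncard)
    (hpal : ∀ v, palette G c v = A ∨ palette G c v = B) :
    ∃ c', IsProperEdgeColoring G c' ∧ ∀ v, palette G c' v = A := by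
  classical
  have hBA : (B \ A).Finite := hBfin.diff
  have hABd : (A \ B).Finite := hAfin.diff
  letI : Fintype (B \ A : Set ℕ) := hBA.fintype
  letI : Fintype (A \ B : Set ℕ) := hABd.fintype
  have hcard' : Fintype.card (B \ A : Set ℕ) = Fintype.card (A \ B : Set ℕ) := by
    have h1 : (B \ A).ncard = (A \ B).ncard :=
      ((Set.ncard_eq_ncard_iff_ncard_diff_eq_ncard_diff hAfin hBfin).mp hcard).symm
    rwa [← Nat.card_coe_set_eq, ← Nat.card_coe_set_eq,
      Nat.card_eq_fintype_card, Nat.card_eq_fintype_card] at h1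
  set g : (B \ A : Set ℕ) ≃ (A \ B : Set ℕ) := Fintype.equivOfCardEq hcard' with hg
  set f : ℕ → ℕ := fun x => if h : x ∈ B \ A then (g ⟨x, h⟩ : ℕ) else x with hf
  have hmem : ∀ x (h : x ∈ B \ A), f x ∈ A \ B := by
    intro x h; simp only [hf, dif_pos h]; exact (g ⟨x, h⟩).2
  have hfix : ∀ x, x ∉ B \ A → f x = x := by intro x h; simp only [hf, dif_neg h]
  have hfixA : ∀ x, x ∈ A → f x = x := fun x hx => hfix x (fun h => h.2 hx)
  have hinjB : Set.InjOn f B := by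
    intro x hx y hy hxy
    by_cases hx' : x ∈ B \ A <;> by_cases hy' : y ∈ B \ A
    · have := hxy
      simp only [hf, dif_pos hx', dif_pos hy'] at this
      have := g.injective (Subtype.coe_injective this)
      exact Subtype.mk_eq_mk.mp this
    · exfalso
      have h1 := hmem x hx'
      rw [hxy, hfix y hy'] at h1
      exact h1.2 hy
    · exfalso
      have h1 := hmem y hy'
      rw [← hxy, hfix x hx'] at h1
      exact h1.2 hx
    · rwa [hfix x hx', hfix y hy'] at hxy
  have hinjA : Set.InjOn f A := by
    intro x hx y hy hxy
    rwa [hfixA x hx, hfixA y hy] at hxy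
  have himgB : f '' B = A := by
    apply Set.Subset.antisymm
    · rintro - ⟨x, hx, rfl⟩
      by_cases hx' : x ∈ B \ A
      · exact (hmem x hx').1
      · rw [hfix x hx']
        by_contra hxa
        exact hx' ⟨hx, hxa⟩
    · intro y hy
      by_cases hy' : y ∈ B
      · exact ⟨y, hy', hfixA y hy⟩
      · obtain ⟨x, hx⟩ := g.surjective ⟨y, hy, hy'⟩
        refine ⟨x, x.2.1, ?_⟩
        simp only [hf, dif_pos x.2]
        rw [hx]
  have himgA : f '' A = A := by
    apply Set.Subset.antisymm
    · rintro - ⟨x, hx, rfl⟩; rw [hfixA x hx]; exact hx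
    · intro y hy; exact ⟨y, hy, hfixA y hy⟩
  refine ⟨fun e => f (c e), ?_, ?_⟩
  · intro e1 h1 e2 h2 hne hshare
    obtain ⟨w, hw1, hw2⟩ := hshare
    have hcc := hc e1 h1 e2 h2 hne ⟨w, hw1, hw2⟩
    have hm1 : c e1 ∈ palette G c w := Set.mem_image_of_mem c ⟨h1, hw1⟩
    have hm2 : c e2 ∈ palette G c w := Set.mem_image_of_mem c ⟨h2, hw2⟩
    show f (c e1) ≠ f (c e2)
    rcases hpal w with h | h <;> rw [h] at hm1 hm2
    · exact fun he => hcc (hinjA hm1 hm2 he)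
    · exact fun he => hcc (hinjB hm1 hm2 he)
  · intro v
    have : palette G (fun e => f (c e)) v = f '' palette G c v := by
      unfold palette
      rw [← Set.image_comp]
      rfl
    rw [this]
    rcases hpal v with h | h <;> rw [h]
    · exact himgA
    · exact himgB

lemma lower_bound_three [DecidableRel G.Adj] [Nonempty V]
    (hreg : G.IsRegularOfDegree 3)
    (hncol : ¬ ∃ c', IsProperEdgeColoring G c' ∧ ∀ e ∈ G.edgeSet, c' e < 3)
    (hc : IsProperEdgeColoring G c) : 3 ≤ numPalettes G c := by
  classical
  by_contra hlt
  push_neg at hlt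
  interval_cases h : numPalettes G c
  · unfold numPalettes at h
    rw [Set.ncard_eq_zero (Set.finite_range _)] at h
    exact absurd h (Set.range_nonempty _).ne_empty
  · unfold numPalettes at h
    rw [Set.ncard_eq_one] at h
    obtain ⟨P, hP⟩ := h
    have hPal : ∀ v, palette G c v = P := by
      intro v
      have : palette G c v ∈ Set.range (palette G c) := Set.mem_range_self v
      rw [hP] at this
      exact this
    obtain ⟨v0⟩ := ‹Nonempty V›
    have h3 : P.ncard = 3 := by rw [← hPal v0]; exact palette_ncard hc hreg v0
    obtain ⟨a, b, d, hab, had, hbd, rfl⟩ := Set.ncard_eq_three.mp h3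
    exact hncol (exists_lt3_of_colors_sub hc hab had hbd (colors_sub_of_palette hPal))
  · unfold numPalettes at h
    rw [Set.ncard_eq_two] at h
    obtain ⟨A, B, hABne, hAB⟩ := h
    have hPal : ∀ v, palette G c v = A ∨ palette G c v = B := by
      intro v
      have : palette G c v ∈ Set.range (palette G c) := Set.mem_range_self v
      rw [hAB] at this
      exact this
    have hArange : A ∈ Set.range (palette G c) := by rw [hAB]; exact Set.mem_insert _ _
    have hBrange : B ∈ Set.range (palette G c) := by
      rw [hAB]; exact Set.mem_insert_of_mem _ rfl
    obtain ⟨u, hu⟩ := hArange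
    obtain ⟨w, hw⟩ := hBrange
    have hAfin : A.Finite := hu ▸ palette_finite u
    have hBfin : B.Finite := hw ▸ palette_finite w
    have hA3 : A.ncard = 3 := by rw [← hu]; exact palette_ncard hc hreg u
    have hB3 : B.ncard = 3 := by rw [← hw]; exact palette_ncard hc hreg w
    obtain ⟨c', hc', hpal'⟩ := remap_two hc A B hAfin hBfin (hA3.trans hB3.symm) hPal
    obtain ⟨a, b, d, hab, had, hbd, hAeq⟩ := Set.ncard_eq_three.mp hA3
    subst hAeq
    exact hncol (exists_lt3_of_colors_sub hc' hab had hbd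
      (colors_sub_of_palette hpal'))

lemma exists_coloring_le_three [DecidableRel G.Adj] (hreg : G.IsRegularOfDegree 3)
    (M : G.Subgraph) (hM : M.IsPerfectMatching) :
    ∃ c, IsProperEdgeColoring G c ∧ numPalettes G c ≤ 3 := by
  classical
  set F : SimpleGraph V := G.deleteEdges M.edgeSet with hF
  have hFedge : F.edgeSet = G.edgeSet \ M.edgeSet := G.edgeSet_deleteEdges _
  have hpart : ∀ v : V, ∃! w, M.Adj v w := fun v => hM.1 (hM.2 v)
  set p : V → V := fun v => (hpart v).exists.choose with hp
  have hpadj : ∀ v, M.Adj v (p v) := fun v => (hpart v).exists.choose_spec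
  have hpuniq : ∀ v w, M.Adj v w → w = p v := by
    intro v w hw
    exact ((hpart v).unique hw (hpadj v))
  have hpG : ∀ v, G.Adj v (p v) := fun v => M.adj_sub (hpadj v)
  have hmem_inc : ∀ v, s(v, p v) ∈ G.incidenceSet v :=
    fun v => G.mk'_mem_incidenceSet_left_iff.2 (hpG v)
  have hFinc : ∀ v, F.incidenceSet v = G.incidenceSet v \ {s(v, p v)} := by
    intro v
    ext e
    constructor
    · rintro ⟨heF, hv⟩
      rw [hFedge] at heF
      refine ⟨⟨heF.1, hv⟩, ?_⟩
      intro heq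
      rw [Set.mem_singleton_iff] at heq
      apply heF.2
      rw [heq, Subgraph.mem_edgeSet]
      exact hpadj v
    · rintro ⟨⟨heG, hv⟩, hne⟩
      refine ⟨?_, hv⟩
      rw [hFedge]
      refine ⟨heG, ?_⟩
      intro heM
      obtain ⟨u, rfl⟩ := Sym2.mem_iff_exists.mp hv
      rw [Subgraph.mem_edgeSet] at heM
      exact hne (by rw [Set.mem_singleton_iff, hpuniq v u heM])
  have hfinG : ∀ v : V, (G.incidenceSet v).Finite := fun v => Set.toFinite _
  have hfinF : ∀ v : V, (F.incidenceSet v).Finite := fun v => Set.toFinite _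
  have hFinc2 : ∀ v, (F.incidenceSet v).ncard = 2 := by
    intro v
    rw [hFinc v, Set.ncard_diff_singleton_of_mem (hmem_inc v),
      incidence_ncard hreg v]
  obtain ⟨ι, hι⟩ := Countable.exists_injective_nat (Sym2 V)
  set adjR : ℕ → ℕ → Prop := fun m n => ∃ e1 e2 : Sym2 V, ι e1 = m ∧ ι e2 = n ∧
    e1 ∈ F.edgeSet ∧ e2 ∈ F.edgeSet ∧ e1 ≠ e2 ∧ (∃ w, w ∈ e1 ∧ w ∈ e2) with hadjR
  set col : Sym2 V → ℕ := fun e => greedyCol adjR (ι e) with hcol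
  have hnbr : ∀ e ∈ F.edgeSet,
      {e' : Sym2 V | e' ∈ F.edgeSet ∧ e' ≠ e ∧ ∃ w, w ∈ e' ∧ w ∈ e}.ncard ≤ 2 := by
    intro e he
    induction e using Sym2.ind with
    | _ x y =>
      have hsub : {e' : Sym2 V | e' ∈ F.edgeSet ∧ e' ≠ s(x, y) ∧ ∃ w, w ∈ e' ∧ w ∈ s(x, y)}
          ⊆ (F.incidenceSet x \ {s(x, y)}) ∪ (F.incidenceSet y \ {s(x, y)}) := by
        rintro e' ⟨he', hne, w, hw1, hw2⟩
        rw [Sym2.mem_iff] at hw2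
        simp only [Set.mem_union, Set.mem_diff, SimpleGraph.incidenceSet,
          Set.mem_setOf_eq, Set.mem_singleton_iff]
        rcases hw2 with rfl | rfl
        · exact Or.inl ⟨⟨he', hw1⟩, hne⟩
        · exact Or.inr ⟨⟨he', hw1⟩, hne⟩
      calc _ ≤ ((F.incidenceSet x \ {s(x, y)}) ∪ (F.incidenceSet y \ {s(x, y)})).ncard :=
            Set.ncard_le_ncard hsub (Set.toFinite _)
        _ ≤ (F.incidenceSet x \ {s(x, y)}).ncard + (F.incidenceSet y \ {s(x, y)}).ncard :=
            Set.ncard_union_le _ _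
        _ ≤ 2 := by
            have hmx : s(x, y) ∈ F.incidenceSet x := by
              exact ⟨he, Sym2.mem_mk_left x y⟩
            have hmy : s(x, y) ∈ F.incidenceSet y := by
              exact ⟨he, Sym2.mem_mk_right x y⟩
            rw [Set.ncard_diff_singleton_of_mem hmx,
              Set.ncard_diff_singleton_of_mem hmy, hFinc2 x, hFinc2 y]
  have hcol_lt : ∀ e ∈ F.edgeSet, col e < 3 := by
    intro e he
    apply greedyCol_lt
    have hsub : {m : ℕ | m < ι e ∧ adjR m (ι e)} ⊆
        ι '' {e' : Sym2 V | e' ∈ F.edgeSet ∧ e' ≠ e ∧ ∃ w, w ∈ e' ∧ w ∈ e} := by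
      rintro m ⟨-, e1, e2, rfl, he2, he1F, he2F, hne, w, hw1, hw2⟩
      have : e2 = e := hι he2
      subst this
      exact ⟨e1, ⟨he1F, hne, w, hw1, hw2⟩, rfl⟩
    calc _ ≤ (ι '' {e' : Sym2 V | e' ∈ F.edgeSet ∧ e' ≠ e ∧ ∃ w, w ∈ e' ∧ w ∈ e}).ncard :=
          Set.ncard_le_ncard hsub (Set.toFinite _)
      _ ≤ _ := Set.ncard_image_le (Set.toFinite _)
      _ ≤ 2 := hnbr e he
  have hcol_ne : ∀ e1 ∈ F.edgeSet, ∀ e2 ∈ F.edgeSet, e1 ≠ e2 →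
      (∃ w, w ∈ e1 ∧ w ∈ e2) → col e1 ≠ col e2 := by
    intro e1 h1 e2 h2 hne hsh
    have hine : ι e1 ≠ ι e2 := fun h => hne (hι h)
    rcases lt_or_gt_of_ne hine with h | h
    · intro hcc
      exact greedyCol_mem adjR (ι e2) (ι e1) h
        ⟨e1, e2, rfl, rfl, h1, h2, hne, hsh⟩ hcc
    · intro hcc
      obtain ⟨w, hw1, hw2⟩ := hsh
      exact greedyCol_mem adjR (ι e1) (ι e2) h
        ⟨e2, e1, rfl, rfl, h2, h1, hne.symm, w, hw2, hw1⟩ hcc.symm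
  set c : Sym2 V → ℕ := fun e => if e ∈ F.edgeSet then col e else 3 with hc
  have hcF : ∀ e ∈ F.edgeSet, c e = col e := by intro e he; simp [hc, he]
  have hcM : ∀ e, e ∉ F.edgeSet → c e = 3 := by intro e he; simp [hc, he]
  refine ⟨c, ?_, ?_⟩
  · intro e1 h1 e2 h2 hne hsh
    by_cases hf1 : e1 ∈ F.edgeSet <;> by_cases hf2 : e2 ∈ F.edgeSet
    · rw [hcF e1 hf1, hcF e2 hf2]
      exact hcol_ne e1 hf1 e2 hf2 hne hsh
    · rw [hcF e1 hf1, hcM e2 hf2]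
      exact Nat.ne_of_lt (hcol_lt e1 hf1)
    · rw [hcM e1 hf1, hcF e2 hf2]
      exact (Nat.ne_of_lt (hcol_lt e2 hf2)).symm
    · exfalso
      obtain ⟨w, hw1, hw2⟩ := hsh
      have hm1 : e1 ∈ M.edgeSet := by
        by_contra hm
        exact hf1 (by rw [hFedge]; exact ⟨h1, hm⟩)
      have hm2 : e2 ∈ M.edgeSet := by
        by_contra hm
        exact hf2 (by rw [hFedge]; exact ⟨h2, hm⟩)
      obtain ⟨u1, rfl⟩ := Sym2.mem_iff_exists.mp hw1
      obtain ⟨u2, rfl⟩ := Sym2.mem_iff_exists.mp hw2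
      rw [Subgraph.mem_edgeSet] at hm1 hm2
      rw [hpuniq w u1 hm1, hpuniq w u2 hm2] at hne
      exact hne rfl
  · have hpal : ∀ v, ∃ a b, a < 3 ∧ b < 3 ∧ a ≠ b ∧ palette G c v = {3, a, b} := by
      intro v
      obtain ⟨e1, e2, he12, hFv⟩ := Set.ncard_eq_two.mp (hFinc2 v)
      have he1 : e1 ∈ F.incidenceSet v := by rw [hFv]; exact Set.mem_insert _ _
      have he2 : e2 ∈ F.incidenceSet v := by rw [hFv]; exact Set.mem_insert_of_mem _ rfl
      have hGv : G.incidenceSet v = insert s(v, p v) (F.incidenceSet v) := by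
        rw [hFinc v, Set.insert_diff_singleton, Set.insert_eq_self.mpr (hmem_inc v)]
      have hmv : s(v, p v) ∉ F.edgeSet := by
        rw [hFedge]
        rintro ⟨-, hmm⟩
        exact hmm (Subgraph.mem_edgeSet.mpr (hpadj v))
      refine ⟨col e1, col e2, hcol_lt e1 he1.1, hcol_lt e2 he2.1, ?_, ?_⟩
      · exact hcol_ne e1 he1.1 e2 he2.1 he12 ⟨v, he1.2, he2.2⟩
      · rw [palette, hGv, hFv, Set.image_insert_eq, Set.image_insert_eq,
          Set.image_singleton, hcM _ hmv, hcF e1 he1.1, hcF e2 he2.1]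
    have hrange : Set.range (palette G c) ⊆
        ({{3, 0, 1}, {3, 0, 2}, {3, 1, 2}} : Set (Set ℕ)) := by
      rintro - ⟨v, rfl⟩
      obtain ⟨a, b, ha, hb, hab, hPv⟩ := hpal v
      rw [hPv]
      interval_cases a <;> interval_cases b <;> simp_all <;>
        first
          | (left; ext x; simp; tauto)
          | (right; left; ext x; simp; tauto)
          | (right; right; ext x; simp; tauto)
    calc numPalettes G c ≤ ({{3, 0, 1}, {3, 0, 2}, {3, 1, 2}} : Set (Set ℕ)).ncard :=
          Set.ncard_le_ncard hrange (Set.toFinite _)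
      _ ≤ 3 := by
          apply le_trans (Set.ncard_insert_le _ _)
          have h2 : ({{3, 0, 2}, {3, 1, 2}} : Set (Set ℕ)).ncard ≤ 2 := by
            apply le_trans (Set.ncard_insert_le _ _)
            simp [Set.ncard_singleton]
          omega

lemma matching_of_select (hc : IsProperEdgeColoring G c) (S : Set ℕ)
    (hS : ∀ v, (palette G c v ∩ S).ncard = 1) :
    ∃ M : G.Subgraph, M.IsPerfectMatching := by
  classical
  have key : ∀ v : V, ∃! w : V, G.Adj v w ∧ c s(v, w) ∈ S := by
    intro v
    have hEv : (c '' {e ∈ G.incidenceSet v | c e ∈ S}) = palette G c v ∩ S := by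
      apply Set.Subset.antisymm
      · rintro - ⟨e, ⟨he, hcS⟩, rfl⟩
        exact ⟨Set.mem_image_of_mem c he, hcS⟩
      · rintro x ⟨⟨e, he, rfl⟩, hxS⟩
        exact ⟨e, ⟨he, hxS⟩, rfl⟩
    have hcard : ({e ∈ G.incidenceSet v | c e ∈ S}).ncard = 1 := by
      rw [← hS v, ← hEv]
      exact (Set.ncard_image_of_injOn
        ((injOn_incidence hc v).mono (fun e he => he.1))).symm
    obtain ⟨e, he⟩ := Set.ncard_eq_one.mp hcard
    have heMem : e ∈ {e ∈ G.incidenceSet v | c e ∈ S} := by rw [he]; rfl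
    obtain ⟨⟨heE, hv⟩, hcS⟩ := heMem
    obtain ⟨w, rfl⟩ := Sym2.mem_iff_exists.mp hv
    refine ⟨w, ⟨heE, hcS⟩, ?_⟩
    intro w' ⟨hadj', hcS'⟩
    have : s(v, w') ∈ {e ∈ G.incidenceSet v | c e ∈ S} :=
      ⟨⟨hadj', Sym2.mem_mk_left _ _⟩, hcS'⟩
    rw [he, Set.mem_singleton_iff] at this
    exact (Sym2.congr_right.mp this)
  refine ⟨⟨Set.univ, fun u w => G.Adj u w ∧ c s(u, w) ∈ S, fun h => h.1,
    fun _ => trivial, ?_⟩, ?_, fun v => trivial⟩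
  · refine ⟨fun u w ⟨h, hcs⟩ => ?_⟩
    exact ⟨h.symm, by rwa [Sym2.eq_swap]⟩
  · intro v _
    obtain ⟨w, hw, huniq⟩ := key v
    exact ⟨w, hw, fun w' hw' => huniq w' hw'⟩

end Graph

end PaletteAux

theorem cubic_palette_three_iff {V : Type*} [Fintype V]
    (G : SimpleGraph V) [DecidableRel G.Adj]
    (hconn : G.Connected) (hreg : G.IsRegularOfDegree 3) :
    ((¬ ∃ c, IsProperEdgeColoring G c ∧ ∀ e ∈ G.edgeSet, c e < 3) ∧
      (∃ M : G.Subgraph, M.IsPerfectMatching)) ↔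
      paletteIndex G = 3 := by
  classical
  haveI : Nonempty V := hconn.nonempty
  set Sset : Set ℕ := { n | ∃ c, IsProperEdgeColoring G c ∧ numPalettes G c = n } with hSset
  have hSne : Sset.Nonempty := by
    obtain ⟨ι, hι⟩ := Countable.exists_injective_nat (Sym2 V)
    exact ⟨numPalettes G ι, ι, fun e1 _ e2 _ hne _ h => hne (hι h), rfl⟩
  have hPI : paletteIndex G = sInf Sset := rfl
  constructor
  · rintro ⟨hncol, M, hM⟩
    obtain ⟨c0, hc0, hle⟩ := exists_coloring_le_three hreg M hM
    have hlb : ∀ n ∈ Sset, 3 ≤ n := by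
      rintro n ⟨c, hc, rfl⟩
      exact lower_bound_three hreg hncol hc
    have h3 : numPalettes G c0 = 3 := le_antisymm hle (hlb _ ⟨c0, hc0, rfl⟩)
    rw [hPI]
    exact le_antisymm (Nat.sInf_le ⟨c0, hc0, h3⟩) (le_csInf hSne hlb)
  · intro hpi
    rw [hPI] at hpi
    have hmem : (3 : ℕ) ∈ Sset := hpi ▸ Nat.sInf_mem hSne
    obtain ⟨c, hc, h3⟩ := hmem
    constructor
    · rintro ⟨c', hc', hlt⟩
      have hone : numPalettes G c' = 1 := by
        have hpal : ∀ v, palette G c' v = {0, 1, 2} := by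
          intro v
          have hsub : palette G c' v ⊆ {0, 1, 2} := by
            rintro - ⟨e, he, rfl⟩
            have := hlt e he.1
            simp only [Set.mem_insert_iff, Set.mem_singleton_iff]
            omega
          apply Set.eq_of_subset_of_ncard_le hsub _ (Set.toFinite _)
          rw [palette_ncard hc' hreg v, Set.ncard_insert_of_notMem (by simp),
            Set.ncard_insert_of_notMem (by simp), Set.ncard_singleton]
        have hr : Set.range (palette G c') = {({0, 1, 2} : Set ℕ)} := by
          apply Set.Subset.antisymm
          · rintro - ⟨v, rfl⟩
            exact hpal v
          · rintro P hP
            rw [Set.mem_singleton_iff] at hP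
            obtain ⟨v0⟩ := ‹Nonempty V›
            exact ⟨v0, hP ▸ hpal v0⟩
        unfold numPalettes
        rw [hr, Set.ncard_singleton]
      have : sInf Sset ≤ 1 := Nat.sInf_le ⟨c', hc', hone⟩
      omega
    · unfold numPalettes at h3
      obtain ⟨P1, P2, P3, h12, h13, h23, hr⟩ := Set.ncard_eq_three.mp h3
      have hPal : ∀ v, palette G c v = P1 ∨ palette G c v = P2 ∨ palette G c v = P3 := by
        intro v
        have : palette G c v ∈ Set.range (palette G c) := Set.mem_range_self v
        rw [hr] at this
        exact this
      have hmemr : ∀ P ∈ ({P1, P2, P3} : Set (Set ℕ)),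
          P.Finite ∧ P.ncard = 3 := by
        intro P hP
        have : P ∈ Set.range (palette G c) := by rw [hr]; exact hP
        obtain ⟨v, rfl⟩ := this
        exact ⟨palette_finite v, palette_ncard hc hreg v⟩
      obtain ⟨hf1, hc1⟩ := hmemr P1 (Set.mem_insert _ _)
      obtain ⟨hf2, hc2⟩ := hmemr P2 (Set.mem_insert_of_mem _ (Set.mem_insert _ _))
      obtain ⟨hf3, hc3⟩ := hmemr P3 (Set.mem_insert_of_mem _ (Set.mem_insert_of_mem _ rfl))
      obtain ⟨S, hS1, hS2, hS3⟩ := exists_select P1 P2 P3 hf1 hf2 hf3 hc1 hc2 hc3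
      apply matching_of_select hc S
      intro v
      rcases hPal v with h | h | h <;> rw [h] <;> assumption
end

section
/- Let k be a positive integer and let G_1, …, G_k be finite simple graphs, each with at least one vertex, such that G_i is r_i-regular and the degrees r_1, …, r_k are pairwise distinct. Then the palette index of the disjoint union of G_1, …, G_k equals the sum of their palette indices: š(G_1 ⊔ ⋯ ⊔ G_k) = š(G_1) + ⋯ + š(G_k). -/
open SimpleGraph

/-- The disjoint union of a family of graphs. -/
def disjUnionGraph {ι : Type*} {V : ι → Type*} (G : ∀ i, SimpleGraph (V i)) :
    SimpleGraph (Σ i, V i) where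
  Adj x y := ∃ (i : ι) (a b : V i), (G i).Adj a b ∧ x = ⟨i, a⟩ ∧ y = ⟨i, b⟩
  symm := by
    constructor
    rintro x y ⟨i, a, b, h, rfl, rfl⟩
    exact ⟨i, b, a, h.symm, rfl, rfl⟩
  loopless := by
    constructor
    rintro x ⟨i, a, b, h, rfl, h2⟩
    obtain rfl : a = b := by simpa using h2
    exact (G i).loopless.irrefl a h

section Aux
variable {ι : Type*} {V : ι → Type*} {G : ∀ i, SimpleGraph (V i)}

/-- inclusion of a component -/
def cEmb (i : ι) : V i → Σ j, V j := fun a => ⟨i, a⟩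

lemma cEmb_inj (i : ι) : Function.Injective (cEmb (V := V) i) := fun a b h => by
  simpa [cEmb] using h

lemma mem_edgeSet_disjUnion {e : Sym2 (Σ j, V j)} :
    e ∈ (disjUnionGraph G).edgeSet ↔
      ∃ i f, f ∈ (G i).edgeSet ∧ e = Sym2.map (cEmb i) f := by
  induction e using Sym2.ind with
  | _ x y =>
    constructor
    · rintro ⟨i, a, b, hab, rfl, rfl⟩
      exact ⟨i, s(a, b), hab, rfl⟩
    · rintro ⟨i, f, hf, he⟩
      induction f using Sym2.ind with
      | _ a b =>
        rw [Sym2.map_pair_eq] at he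
        rw [Sym2.eq_iff] at he
        rcases he with ⟨rfl, rfl⟩ | ⟨rfl, rfl⟩
        · exact ⟨i, a, b, hf, rfl, rfl⟩
        · exact ⟨i, b, a, (G i).adj_symm hf, rfl, rfl⟩

lemma incidenceSet_disjUnion (i : ι) (v : V i) :
    (disjUnionGraph G).incidenceSet ⟨i, v⟩ =
      Sym2.map (cEmb i) '' (G i).incidenceSet v := by
  ext e
  constructor
  · rintro ⟨he, hv⟩
    rw [mem_edgeSet_disjUnion] at he
    obtain ⟨j, f, hf, rfl⟩ := he
    induction f using Sym2.ind with
    | _ a b =>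
      rw [Sym2.map_pair_eq] at hv ⊢
      rw [Sym2.mem_iff] at hv
      rcases hv with h | h
      · obtain ⟨rfl, hv⟩ := Sigma.mk.inj_iff.mp h.symm
        obtain rfl : a = v := by simpa using hv
        exact ⟨s(a, b), ⟨hf, Sym2.mem_mk_left a b⟩, rfl⟩
      · obtain ⟨rfl, hv⟩ := Sigma.mk.inj_iff.mp h.symm
        obtain rfl : b = v := by simpa using hv
        exact ⟨s(a, b), ⟨hf, Sym2.mem_mk_right a b⟩, rfl⟩
  · rintro ⟨f, ⟨hf, hv⟩, rfl⟩
    refine ⟨mem_edgeSet_disjUnion.mpr ⟨i, f, hf, rfl⟩, ?_⟩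
    exact Sym2.mem_map.mpr ⟨v, hv, rfl⟩

end Aux
section Aux2
variable {ι : Type*} {V : ι → Type*} {G : ∀ i, SimpleGraph (V i)}

lemma proper_restrict {c : Sym2 (Σ j, V j) → ℕ}
    (hc : IsProperEdgeColoring (disjUnionGraph G) c) (i : ι) :
    IsProperEdgeColoring (G i) (c ∘ Sym2.map (cEmb i)) := by
  intro e₁ he₁ e₂ he₂ hne ⟨v, hv₁, hv₂⟩
  refine hc _ (mem_edgeSet_disjUnion.mpr ⟨i, e₁, he₁, rfl⟩)
    _ (mem_edgeSet_disjUnion.mpr ⟨i, e₂, he₂, rfl⟩)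
    (fun h => hne (Sym2.map.injective (cEmb_inj i) h))
    ⟨⟨i, v⟩, Sym2.mem_map.mpr ⟨v, hv₁, rfl⟩, Sym2.mem_map.mpr ⟨v, hv₂, rfl⟩⟩

lemma palette_restrict (c : Sym2 (Σ j, V j) → ℕ) (i : ι) (v : V i) :
    palette (disjUnionGraph G) c ⟨i, v⟩ = palette (G i) (c ∘ Sym2.map (cEmb i)) v := by
  rw [palette, palette, incidenceSet_disjUnion, Set.image_image]
  rfl

/-- the palette of a vertex under a proper coloring has size the degree -/
lemma palette_ncard_s15 {W : Type*} {H : SimpleGraph W} {c : Sym2 W → ℕ}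
    (hc : IsProperEdgeColoring H c) (v : W) :
    (palette H c v).ncard = (H.neighborSet v).ncard := by
  classical
  have hinj : Set.InjOn c (H.incidenceSet v) := by
    intro e₁ h₁ e₂ h₂ hce
    by_contra hne
    exact hc e₁ h₁.1 e₂ h₂.1 hne ⟨v, h₁.2, h₂.2⟩ hce
  rw [palette, Set.ncard_image_of_injOn hinj]
  rw [← Nat.card_coe_set_eq, ← Nat.card_coe_set_eq]
  exact Nat.card_congr (H.incidenceSetEquivNeighborSet v)

lemma ncard_iUnion_of_disjoint {n : ℕ} (S : Fin n → Set (Set ℕ))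
    (hfin : ∀ i, (S i).Finite) (hdisj : Pairwise (Function.onFun Disjoint S)) :
    (⋃ i, S i).ncard = ∑ i, (S i).ncard := by
  classical
  have h1 : (⋃ i, S i) = ↑(Finset.univ.biUnion fun i => (hfin i).toFinset) := by
    ext x
    simp [Set.mem_iUnion]
  rw [h1, Set.ncard_coe_finset]
  rw [Finset.card_biUnion]
  · exact Finset.sum_congr rfl fun i _ => by
      rw [← Set.ncard_coe_finset, (hfin i).coe_toFinset]
  · intro i _ j _ hij
    have := hdisj hij
    simp only [Finset.disjoint_left, Set.Finite.mem_toFinset]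
    intro a ha hb
    exact (Set.disjoint_left.mp this) ha hb

end Aux2
section Aux3
variable {ι : Type*} [DecidableEq ι] {V : ι → Type*} {G : ∀ i, SimpleGraph (V i)}

/-- glue a family of colorings into one on the disjoint union -/
def glue (c : ∀ i, Sym2 (V i) → ℕ) : Sym2 (Σ j, V j) → ℕ :=
  Sym2.lift ⟨fun x y =>
    if h : y.1 = x.1 then c x.1 s(x.2, h ▸ y.2) else 0, by
    rintro ⟨i, a⟩ ⟨j, b⟩
    dsimp only
    rcases eq_or_ne i j with rfl | hne
    · simp [Sym2.eq_swap]
    · rw [dif_neg (Ne.symm hne), dif_neg hne]⟩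

@[simp] lemma glue_map (c : ∀ i, Sym2 (V i) → ℕ) (i : ι) (f : Sym2 (V i)) :
    glue c (Sym2.map (cEmb i) f) = c i f := by
  induction f using Sym2.ind with
  | _ a b => simp [glue, cEmb]

lemma glue_proper (c : ∀ i, Sym2 (V i) → ℕ)
    (hc : ∀ i, IsProperEdgeColoring (G i) (c i)) :
    IsProperEdgeColoring (disjUnionGraph G) (glue c) := by
  intro e₁ he₁ e₂ he₂ hne ⟨w, hw₁, hw₂⟩
  obtain ⟨i, f₁, hf₁, rfl⟩ := mem_edgeSet_disjUnion.mp he₁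
  obtain ⟨j, f₂, hf₂, rfl⟩ := mem_edgeSet_disjUnion.mp he₂
  obtain ⟨u₁, hu₁, rfl⟩ := Sym2.mem_map.mp hw₁
  obtain ⟨u₂, hu₂, hu⟩ := Sym2.mem_map.mp hw₂
  obtain ⟨rfl, hv⟩ := Sigma.mk.inj_iff.mp hu
  obtain rfl : u₂ = u₁ := by simpa using hv
  rw [glue_map, glue_map]
  exact hc _ f₁ hf₁ f₂ hf₂
    (fun h => hne (by rw [h])) ⟨_, hu₁, hu₂⟩

end Aux3
lemma exists_proper {W : Type*} [Finite W] (H : SimpleGraph W) :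
    ∃ c, IsProperEdgeColoring H c := by
  obtain ⟨f, hf⟩ := (countable_iff_exists_injective (Sym2 W)).mp inferInstance
  exact ⟨f, fun e₁ _ e₂ _ hne _ h => hne (hf h)⟩

lemma paletteIndex_spec {W : Type*} [Finite W] (H : SimpleGraph W) :
    ∃ c, IsProperEdgeColoring H c ∧ numPalettes H c = paletteIndex H := by
  obtain ⟨c₀, hc₀⟩ := exists_proper H
  have hne : ({n | ∃ c, IsProperEdgeColoring H c ∧ numPalettes H c = n}).Nonempty :=
    ⟨numPalettes H c₀, c₀, hc₀, rfl⟩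
  exact Nat.sInf_mem hne

section Main
variable {k : ℕ} {V : Fin k → Type*} [∀ i, Fintype (V i)]
  {G : ∀ i, SimpleGraph (V i)} {r : Fin k → ℕ}

lemma numPalettes_disjUnion
    (hreg : ∀ i, ∀ v, ((G i).neighborSet v).ncard = r i)
    (hinj : Function.Injective r)
    {c : Sym2 (Σ j, V j) → ℕ} (hc : IsProperEdgeColoring (disjUnionGraph G) c) :
    numPalettes (disjUnionGraph G) c
      = ∑ i, numPalettes (G i) (c ∘ Sym2.map (cEmb i)) := by
  set S : Fin k → Set (Set ℕ) :=
    fun i => Set.range (palette (G i) (c ∘ Sym2.map (cEmb i))) with hS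
  have hrange : Set.range (palette (disjUnionGraph G) c) = ⋃ i, S i := by
    ext P
    simp only [Set.mem_range, Set.mem_iUnion, hS]
    constructor
    · rintro ⟨⟨i, v⟩, rfl⟩
      exact ⟨i, v, (palette_restrict c i v).symm⟩
    · rintro ⟨i, v, rfl⟩
      exact ⟨⟨i, v⟩, palette_restrict c i v⟩
  have hsize : ∀ i, ∀ P ∈ S i, P.ncard = r i := by
    rintro i P ⟨v, rfl⟩
    rw [palette_ncard_s15 (proper_restrict hc i) v, hreg]
  have hdisj : Pairwise (Function.onFun Disjoint S) := by
    intro i j hij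
    rw [Function.onFun, Set.disjoint_left]
    intro P hPi hPj
    exact hij (hinj ((hsize i P hPi).symm.trans (hsize j P hPj)))
  rw [numPalettes, hrange,
    ncard_iUnion_of_disjoint S (fun i => Set.finite_range _) hdisj]
  exact Finset.sum_congr rfl fun i _ => by rw [hS, numPalettes]

end Main

theorem palette_index_disjoint_union (k : ℕ) (hk : 0 < k)
    (V : Fin k → Type*) [∀ i, Fintype (V i)] [∀ i, Nonempty (V i)]
    (G : ∀ i, SimpleGraph (V i)) (r : Fin k → ℕ)
    (hreg : ∀ i, ∀ v, ((G i).neighborSet v).ncard = r i)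
    (hinj : Function.Injective r) :
    paletteIndex (disjUnionGraph G) = ∑ i, paletteIndex (G i) := by
  classical
  apply le_antisymm
  · choose c hc1 hc2 using fun i => paletteIndex_spec (G i)
    have hp := glue_proper c hc1
    have hnum : numPalettes (disjUnionGraph G) (glue c) = ∑ i, paletteIndex (G i) := by
      rw [numPalettes_disjUnion hreg hinj hp]
      refine Finset.sum_congr rfl fun i _ => ?_
      rw [show (glue c) ∘ Sym2.map (cEmb i) = c i from funext fun f => glue_map c i f,
        hc2]
    exact Nat.sInf_le ⟨glue c, hp, hnum⟩
  · obtain ⟨c, hp, hn⟩ := paletteIndex_spec (disjUnionGraph G)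
    rw [← hn, numPalettes_disjUnion hreg hinj hp]
    exact Finset.sum_le_sum fun i _ =>
      Nat.sInf_le ⟨c ∘ Sym2.map (cEmb i), proper_restrict hp i, rfl⟩
end

section
/- For every positive integer k there exists a finite simple (2k+1)-regular graph G admitting a vertex v such that every edge incident to v is a bridge of G. -/
open SimpleGraph

def pfun (j : ℕ) : ℕ :=
  if j = 0 then 1 else if j = 1 then 2 else if j = 2 then 1
  else if j % 2 = 1 then j + 1 else j - 1

lemma pfun_ne (j : ℕ) : pfun j ≠ j := by unfold pfun; split_ifs <;> omega

lemma pfun_lt {N j : ℕ} (h4 : 3 ≤ N) (hN : N % 2 = 1) (hj : j < N) : pfun j < N := by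
  unfold pfun; split_ifs <;> omega

lemma pfun_eq_one_iff (j : ℕ) : pfun j = 1 ↔ j = 0 ∨ j = 2 := by
  unfold pfun; split_ifs <;> omega

lemma pfun_invol {j j' : ℕ} (hj : j ≠ 1) (h : pfun j' = j) : j' = pfun j := by
  unfold pfun at *; split_ifs at * <;> omega

abbrev Vtx (k : ℕ) := Option (Fin (2*k+1) × Fin (2*k+3))

def Gad (k : ℕ) : SimpleGraph (Vtx k) where
  Adj x y := match x, y with
    | none, none => False
    | none, some (_, j) => (j:ℕ) = 1
    | some (_, j), none => (j:ℕ) = 1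
    | some (i, j), some (i', j') =>
        i = i' ∧ (j:ℕ) ≠ (j':ℕ) ∧ (j':ℕ) ≠ pfun j ∧ (j:ℕ) ≠ pfun j'
  symm := ⟨by rintro (_ | ⟨i, j⟩) (_ | ⟨i', j'⟩) h <;> simp_all <;> tauto⟩
  loopless := ⟨by rintro (_ | ⟨i, j⟩) h <;> simp_all⟩

lemma gad_adj_none_some {k : ℕ} {i : Fin (2*k+1)} {j : Fin (2*k+3)} :
    (Gad k).Adj none (some (i, j)) ↔ (j:ℕ) = 1 := Iff.rfl

lemma gad_adj_some_none {k : ℕ} {i : Fin (2*k+1)} {j : Fin (2*k+3)} :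
    (Gad k).Adj (some (i, j)) none ↔ (j:ℕ) = 1 := Iff.rfl

lemma gad_adj_some_some {k : ℕ} {i i' : Fin (2*k+1)} {j j' : Fin (2*k+3)} :
    (Gad k).Adj (some (i, j)) (some (i', j')) ↔
      i = i' ∧ (j:ℕ) ≠ (j':ℕ) ∧ (j':ℕ) ≠ pfun j ∧ (j:ℕ) ≠ pfun j' := Iff.rfl

def oneF (k : ℕ) : Fin (2*k+3) := ⟨1, by omega⟩

lemma gad_nbr_none (k : ℕ) :
    (Gad k).neighborSet none = Set.range (fun i : Fin (2*k+1) => (some (i, oneF k) : Vtx k)) := by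
  ext x
  cases x with
  | none => simp [neighborSet, Gad]
  | some p =>
    obtain ⟨i, j⟩ := p
    simp only [neighborSet, Set.mem_setOf_eq, gad_adj_none_some, Set.mem_range]
    constructor
    · intro h
      exact ⟨i, by simp [oneF, Fin.ext_iff, h.symm]⟩
    · rintro ⟨i', h⟩
      simp only [Option.some.injEq, Prod.mk.injEq] at h
      rw [← h.2, oneF]

lemma gad_deg_none (k : ℕ) : ((Gad k).neighborSet none).ncard = 2*k+1 := by
  rw [gad_nbr_none, ← Set.image_univ,
    Set.ncard_image_of_injective _ (by intro a b h; simpa using h), Set.ncard_univ]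
  simp

def cF (k : ℕ) (a : ℕ) (h : a < 2*k+3) : Fin (2*k+3) := ⟨a, h⟩

@[simp] lemma cF_val (k a : ℕ) (h : a < 2*k+3) : ((cF k a h : Fin (2*k+3)) : ℕ) = a := rfl

lemma gad_nbr_hubAdj (k : ℕ) (i : Fin (2*k+1)) :
    (Gad k).neighborSet (some (i, oneF k)) =
      insert none ((fun j' : Fin (2*k+3) => (some (i, j') : Vtx k)) ''
        (Set.univ \ {cF k 0 (by omega), cF k 1 (by omega), cF k 2 (by omega)})) := by
  have h1 : ((oneF k : Fin (2*k+3)) : ℕ) = 1 := rfl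
  ext x
  cases x with
  | none =>
    simp only [neighborSet, Set.mem_setOf_eq, gad_adj_some_none, h1, Set.mem_insert_iff,
      Set.mem_image, reduceCtorEq, and_false, exists_false, or_false, true_iff]
  | some p =>
    obtain ⟨i', j'⟩ := p
    simp only [neighborSet, Set.mem_setOf_eq, gad_adj_some_some, Set.mem_insert_iff,
      Set.mem_image, Set.mem_diff, Set.mem_univ, true_and, Set.mem_singleton_iff,
      reduceCtorEq, false_or, h1]
    have hpf : pfun 1 = 2 := rfl
    constructor
    · rintro ⟨rfl, ha, hb, hc⟩
      rw [hpf] at hb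
      have hc' : ¬ ((j':ℕ) = 0 ∨ (j':ℕ) = 2) := fun h => hc ((pfun_eq_one_iff _).mpr h).symm
      refine ⟨j', ⟨?_, rfl⟩⟩
      push_neg
      refine ⟨?_, ?_, ?_⟩ <;>
        · intro h; have := congrArg Fin.val h; simp only [cF_val] at this; omega
    · rintro ⟨j'', ⟨hmem, heq⟩⟩
      push_neg at hmem
      obtain ⟨h0, hb, h2⟩ := hmem
      have h0' : (j'':ℕ) ≠ 0 := fun h => h0 (Fin.ext (by simpa using h))
      have hb' : (j'':ℕ) ≠ 1 := fun h => hb (Fin.ext (by simpa using h))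
      have h2' : (j'':ℕ) ≠ 2 := fun h => h2 (Fin.ext (by simpa using h))
      simp only [Option.some.injEq, Prod.mk.injEq] at heq
      obtain ⟨rfl, rfl⟩ := heq
      refine ⟨rfl, by omega, by omega, fun h => ?_⟩
      rcases (pfun_eq_one_iff ((j'':ℕ))).mp h.symm with hh | hh <;> omega

lemma gad_nbr_other (k : ℕ) (i : Fin (2*k+1)) (j : Fin (2*k+3)) (hj : (j:ℕ) ≠ 1) :
    (Gad k).neighborSet (some (i, j)) =
      (fun j' : Fin (2*k+3) => (some (i, j') : Vtx k)) ''
        (Set.univ \ {j, cF k (pfun j) (pfun_lt (by omega) (by omega) j.isLt)}) := by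
  ext x
  cases x with
  | none =>
    simp only [neighborSet, Set.mem_setOf_eq, gad_adj_some_none, Set.mem_image,
      reduceCtorEq, and_false, exists_false, iff_false]
    exact hj
  | some p =>
    obtain ⟨i', j'⟩ := p
    simp only [neighborSet, Set.mem_setOf_eq, gad_adj_some_some, Set.mem_image,
      Set.mem_diff, Set.mem_univ, true_and, Set.mem_insert_iff, Set.mem_singleton_iff]
    constructor
    · rintro ⟨rfl, ha, hb, hc⟩
      refine ⟨j', ⟨?_, rfl⟩⟩
      push_neg
      refine ⟨fun h => ha (congrArg Fin.val h).symm, fun h => hb (congrArg Fin.val h)⟩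
    · rintro ⟨j'', ⟨hmem, heq⟩⟩
      push_neg at hmem
      obtain ⟨hne, hne'⟩ := hmem
      have hne2 : (j'':ℕ) ≠ (j:ℕ) := fun h => hne (Fin.ext h)
      have hne2' : (j'':ℕ) ≠ pfun (j:ℕ) := fun h => hne' (Fin.ext (by simpa using h))
      simp only [Option.some.injEq, Prod.mk.injEq] at heq
      obtain ⟨rfl, rfl⟩ := heq
      exact ⟨rfl, fun h => hne2 h.symm, hne2', fun hc => hne2' (pfun_invol hj hc.symm)⟩

lemma gad_deg (k : ℕ) (v : Vtx k) : ((Gad k).neighborSet v).ncard = 2*k+1 := by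
  have hinj : ∀ i : Fin (2*k+1),
      Function.Injective (fun j' : Fin (2*k+3) => (some (i, j') : Vtx k)) := by
    intro i a b h; simpa using h
  cases v with
  | none => exact gad_deg_none k
  | some p =>
    obtain ⟨i, j⟩ := p
    by_cases hj : (j:ℕ) = 1
    · have hj' : j = oneF k := Fin.ext (by simpa [oneF] using hj)
      subst hj'
      rw [gad_nbr_hubAdj k i]
      rw [Set.ncard_insert_of_notMem (by simp)]
      rw [Set.ncard_image_of_injective _ (hinj i)]
      rw [Set.ncard_diff (Set.subset_univ _), Set.ncard_univ]
      have h3 : ({cF k 0 (by omega), cF k 1 (by omega), cF k 2 (by omega)} :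
          Set (Fin (2*k+3))).ncard = 3 := by
        rw [Set.ncard_insert_of_notMem (by
          simp only [Set.mem_insert_iff, Set.mem_singleton_iff]
          push_neg
          exact ⟨fun h => by simpa using congrArg Fin.val h,
                 fun h => by simpa using congrArg Fin.val h⟩)]
        rw [Set.ncard_pair (fun h => by simpa using congrArg Fin.val h)]
      rw [h3]
      simp only [Nat.card_eq_fintype_card, Fintype.card_fin]
      omega
    · rw [gad_nbr_other k i j hj]
      rw [Set.ncard_image_of_injective _ (hinj i)]
      rw [Set.ncard_diff (Set.subset_univ _), Set.ncard_univ]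
      have h2 : ({j, cF k (pfun j) (pfun_lt (by omega) (by omega) j.isLt)} :
          Set (Fin (2*k+3))).ncard = 2 := by
        apply Set.ncard_pair
        intro h
        exact pfun_ne (j:ℕ) (by simpa using (congrArg Fin.val h).symm)
      rw [h2]
      simp only [Nat.card_eq_fintype_card, Fintype.card_fin]
      omega

lemma gad_no_walk (k : ℕ) (i : Fin (2*k+1)) :
    ∀ (x y : Vtx k)
      (w : ((Gad k) \ fromEdgeSet {s((none : Vtx k), some (i, oneF k))}).Walk x y),
      y = none → (∃ j, x = some (i, j)) → False := by
  intro x y w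
  induction w with
  | nil => rintro rfl ⟨j, h⟩; exact nomatch h
  | @cons a b c hadj w ih =>
    rintro rfl ⟨j, rfl⟩
    rw [sdiff_adj] at hadj
    obtain ⟨hG, hdel⟩ := hadj
    cases b with
    | none =>
      have hj1 : (j:ℕ) = 1 := hG
      have : j = oneF k := Fin.ext (by simpa [oneF] using hj1)
      subst this
      exact hdel (by
        rw [fromEdgeSet_adj]
        exact ⟨by rw [Sym2.eq_swap]; rfl, by simp⟩)
    | some p =>
      obtain ⟨i', j'⟩ := p
      obtain ⟨rfl, -⟩ := hG
      exact ih rfl ⟨j', rfl⟩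

lemma gad_not_reachable (k : ℕ) (i : Fin (2*k+1)) :
    ¬ ((Gad k) \ fromEdgeSet {s((none : Vtx k), some (i, oneF k))}).Reachable
      none (some (i, oneF k)) := by
  intro h
  obtain ⟨w⟩ := h.symm
  exact gad_no_walk k i _ _ w rfl ⟨oneF k, rfl⟩

theorem exists_odd_regular_with_bridge_vertex (k : ℕ) (hk : 0 < k) :
    ∃ (n : ℕ) (G : SimpleGraph (Fin n)),
      (∀ v, (G.neighborSet v).ncard = 2 * k + 1) ∧
      ∃ v, ∀ e ∈ G.incidenceSet v, G.IsBridge e := by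
  classical
  refine ⟨Fintype.card (Vtx k), ?_, ?_, ?_⟩
  · exact (Gad k).comap (Fintype.equivFin (Vtx k)).symm
  · -- regularity
    intro v
    set eqv := (Fintype.equivFin (Vtx k)).symm with heqv
    have hset : ((Gad k).comap eqv).neighborSet v = eqv ⁻¹' ((Gad k).neighborSet (eqv v)) := by
      ext b; simp [neighborSet, comap_adj]
    rw [hset, ← Equiv.image_symm_eq_preimage, Set.ncard_image_of_injective _
      (Equiv.injective _)]
    exact gad_deg k (eqv v)
  · -- bridge vertex
    set eqv := (Fintype.equivFin (Vtx k)).symm with heqv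
    set G := (Gad k).comap eqv with hG
    refine ⟨eqv.symm none, ?_⟩
    intro e he
    obtain ⟨hedge, hve⟩ := he
    obtain ⟨u, rfl⟩ := Sym2.mem_iff_exists.mp hve
    have hadj : G.Adj (eqv.symm none) u := (G.mem_edgeSet).mp hedge
    have hadj' : (Gad k).Adj (eqv (eqv.symm none)) (eqv u) := hadj
    rw [Equiv.apply_symm_apply] at hadj'
    obtain ⟨⟨i, j⟩, hu⟩ : ∃ p, eqv u = some p := by
      rcases h : eqv u with _ | p
      · rw [h] at hadj'; exact absurd hadj' (by simp [Gad])
      · exact ⟨p, rfl⟩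
    rw [hu] at hadj'
    have hj : j = oneF k := Fin.ext (by simpa [oneF] using (gad_adj_none_some.mp hadj'))
    subst hj
    rw [isBridge_iff]
    refine fun hreach => gad_not_reachable k i ?_
    have hmap : ∀ {a b : Fin (Fintype.card (Vtx k))},
        (G \ fromEdgeSet {s(eqv.symm none, u)}).Adj a b →
        ((Gad k) \ fromEdgeSet {s((none : Vtx k), some (i, oneF k))}).Adj (eqv a) (eqv b) := by
      intro a b hab
      rw [sdiff_adj] at hab ⊢
      obtain ⟨h1, h2⟩ := hab
      refine ⟨h1, ?_⟩
      rw [fromEdgeSet_adj]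
      rintro ⟨hF, hne⟩
      rw [fromEdgeSet_adj] at h2
      apply h2
      have hnone : (none : Vtx k) = eqv (eqv.symm none) := (Equiv.apply_symm_apply _ _).symm
      have hsome : (some (i, oneF k) : Vtx k) = eqv u := hu.symm
      rw [Set.mem_singleton_iff, hnone, hsome, Sym2.eq, Sym2.rel_iff'] at hF
      simp only [Prod.swap_prod_mk, Prod.mk.injEq] at hF
      refine ⟨Set.mem_singleton_iff.mpr ?_, fun h => hne (by rw [h])⟩
      rcases hF with ⟨ha, hb⟩ | ⟨ha, hb⟩
      · have ha' : a = eqv.symm none := eqv.injective ha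
        have hb' : b = u := eqv.injective hb
        subst ha'; subst hb'; rfl
      · have ha' : a = u := eqv.injective ha
        have hb' : b = eqv.symm none := eqv.injective hb
        subst ha'; subst hb'; exact Sym2.eq_swap
    have h3 : ((Gad k) \ fromEdgeSet {s((none : Vtx k), some (i, oneF k))}).Reachable
        (eqv (eqv.symm none)) (eqv u) :=
      SimpleGraph.Reachable.map
        (⟨eqv.toFun, fun {a b} h => hmap h⟩ :
          (G \ fromEdgeSet {s(eqv.symm none, u)}) →g
          ((Gad k) \ fromEdgeSet {s((none : Vtx k), some (i, oneF k))})) hreach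
    rwa [Equiv.apply_symm_apply, hu] at h3
end
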